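/- arXiv:1703.04554 — 12 statements merged into one kernel-verified Lean document; each statement's English description precedes it below -/
import Mathlib

section
/- Let P' ∈ ℝ^{u×v} be another nonnegative matrix with P_{ij} ≤ P'_{ij} for all i, j. Then the basic reproduction number is nondecreasing in the infected residence-time matrix: ρ(G(M,P,B)) ≤ ρ(G(M,P',B)). -/
open Matrix
open scoped ENNReal NNReal

/-- Spectral radius of a real matrix: the largest modulus of a complex eigenvalue. -/
noncomputable def specRad {n : Type*} [Fintype n] [DecidableEq n] (A : Matrix n n ℝ) : ℝ :=
  sSup ((fun z : ℂ => ‖z‖) '' spectrum ℂ (A.map (fun x : ℝ => (x : ℂ))))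

/-- Next generation matrix
`G(M,P,B) = diag(S*)·M·diag(B)·diag(MᵀS*)⁻¹·Pᵀ·diag(ν)·diag((μ+ν)∘(μ+γ+δ))⁻¹`. -/
noncomputable def NGM {u v : ℕ} (Sstar ν μ γ δ : Fin u → ℝ) (B : Fin v → ℝ)
    (M P : Matrix (Fin u) (Fin v) ℝ) : Matrix (Fin u) (Fin u) ℝ :=
  Matrix.diagonal Sstar * M * Matrix.diagonal B *
    Matrix.diagonal (fun j => ((Mᵀ *ᵥ Sstar) j)⁻¹) * Pᵀ *
    Matrix.diagonal ν *
    Matrix.diagonal (fun i => ((μ i + ν i) * (μ i + γ i + δ i))⁻¹)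


section Aux

attribute [local instance] Matrix.linftyOpNormedRing Matrix.linftyOpNormedAlgebra

lemma entryMulNonneg {a b c : ℕ} (X : Matrix (Fin a) (Fin b) ℝ) (Y : Matrix (Fin b) (Fin c) ℝ)
    (hX : ∀ i j, 0 ≤ X i j) (hY : ∀ i j, 0 ≤ Y i j) : ∀ i j, 0 ≤ (X * Y) i j := by
  intro i j
  rw [Matrix.mul_apply]
  exact Finset.sum_nonneg fun k _ => mul_nonneg (hX i k) (hY k j)

lemma entryMulMonoRight {a b c : ℕ} (X : Matrix (Fin a) (Fin b) ℝ) {Y Y' : Matrix (Fin b) (Fin c) ℝ}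
    (hX : ∀ i j, 0 ≤ X i j) (hYY' : ∀ i j, Y i j ≤ Y' i j) :
    ∀ i j, (X * Y) i j ≤ (X * Y') i j := by
  intro i j
  rw [Matrix.mul_apply, Matrix.mul_apply]
  exact Finset.sum_le_sum fun k _ => mul_le_mul_of_nonneg_left (hYY' k j) (hX i k)

lemma entryMulMonoLeft {a b c : ℕ} {X X' : Matrix (Fin a) (Fin b) ℝ} (Y : Matrix (Fin b) (Fin c) ℝ)
    (hY : ∀ i j, 0 ≤ Y i j) (hXX' : ∀ i j, X i j ≤ X' i j) :
    ∀ i j, (X * Y) i j ≤ (X' * Y) i j := by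
  intro i j
  rw [Matrix.mul_apply, Matrix.mul_apply]
  exact Finset.sum_le_sum fun k _ => mul_le_mul_of_nonneg_right (hXX' i k) (hY k j)

lemma entryPowNonneg {u : ℕ} {A : Matrix (Fin u) (Fin u) ℝ} (hA : ∀ i j, 0 ≤ A i j) :
    ∀ n i j, 0 ≤ (A ^ n) i j := by
  intro n
  induction n with
  | zero =>
    intro i j
    rw [pow_zero, Matrix.one_apply]
    split <;> norm_num
  | succ n ih =>
    rw [pow_succ]
    exact entryMulNonneg _ _ ih hA

lemma entryPowMono {u : ℕ} {A A' : Matrix (Fin u) (Fin u) ℝ} (hA : ∀ i j, 0 ≤ A i j)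
    (hA' : ∀ i j, 0 ≤ A' i j) (hle : ∀ i j, A i j ≤ A' i j) :
    ∀ n i j, (A ^ n) i j ≤ (A' ^ n) i j := by
  intro n
  induction n with
  | zero => intro i j; simp
  | succ n ih =>
    intro i j
    rw [pow_succ, pow_succ]
    exact le_trans (entryMulMonoLeft A hA ih i j)
      (entryMulMonoRight _ (entryPowNonneg hA' n) hle i j)

lemma mapPow {u : ℕ} (A : Matrix (Fin u) (Fin u) ℝ) (n : ℕ) :
    (A.map (fun x : ℝ => (x : ℂ))) ^ n = (A ^ n).map (fun x : ℝ => (x : ℂ)) := by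
  induction n with
  | zero =>
    ext i j
    rw [pow_zero, pow_zero, Matrix.map_apply, Matrix.one_apply, Matrix.one_apply]
    split <;> simp
  | succ n ih =>
    rw [pow_succ, pow_succ, ih]
    ext i j
    rw [Matrix.mul_apply, Matrix.map_apply, Matrix.mul_apply]
    push_cast
    simp [Matrix.map_apply]

lemma nnnormMapLe {u : ℕ} {A A' : Matrix (Fin u) (Fin u) ℝ} (hA : ∀ i j, 0 ≤ A i j)
    (hle : ∀ i j, A i j ≤ A' i j) :
    ‖A.map (fun x : ℝ => (x : ℂ))‖₊ ≤ ‖A'.map (fun x : ℝ => (x : ℂ))‖₊ := by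
  rw [Matrix.linfty_opNNNorm_def, Matrix.linfty_opNNNorm_def]
  apply Finset.sup_mono_fun
  intro i _
  apply Finset.sum_le_sum
  intro j _
  simp only [Matrix.map_apply, Complex.nnnorm_real]
  rw [← NNReal.coe_le_coe, coe_nnnorm, coe_nnnorm, Real.norm_eq_abs, Real.norm_eq_abs,
    abs_of_nonneg (hA i j), abs_of_nonneg ((hA i j).trans (hle i j))]
  exact hle i j

lemma specRadEq {u : ℕ} (hu : 0 < u) (A : Matrix (Fin u) (Fin u) ℝ) :
    specRad A = (spectralRadius ℂ (A.map (fun x : ℝ => (x : ℂ)))).toReal := by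
  haveI : NeZero u := ⟨hu.ne'⟩
  letI : CompleteSpace (Matrix (Fin u) (Fin u) ℂ) := FiniteDimensional.complete ℂ _
  set Ahat := A.map (fun x : ℝ => (x : ℂ)) with hAhat
  have hne : (spectrum ℂ Ahat).Nonempty := spectrum.nonempty Ahat
  have hcpt : IsCompact (spectrum ℂ Ahat) := spectrum.isCompact Ahat
  have hSne : ((fun z : ℂ => ‖z‖) '' spectrum ℂ Ahat).Nonempty := hne.image _
  have hSbdd : BddAbove ((fun z : ℂ => ‖z‖) '' spectrum ℂ Ahat) :=
    (hcpt.image continuous_norm).bddAbove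
  have htop : spectralRadius ℂ Ahat ≠ ⊤ :=
    ((spectrum.spectralRadius_le_nnnorm Ahat).trans_lt ENNReal.coe_lt_top).ne
  apply le_antisymm
  · apply csSup_le hSne
    rintro x ⟨z, hz, rfl⟩
    have h1 : (‖z‖₊ : ℝ≥0∞) ≤ spectralRadius ℂ Ahat :=
      le_iSup₂ (f := fun k _ => (‖k‖₊ : ℝ≥0∞)) z hz
    have := ENNReal.toReal_mono htop h1
    simpa using this
  · have h2 : spectralRadius ℂ Ahat ≤ ENNReal.ofReal (sSup ((fun z : ℂ => ‖z‖) '' spectrum ℂ Ahat)) := by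
      apply iSup₂_le
      intro k hk
      have : ‖k‖ ≤ sSup ((fun z : ℂ => ‖z‖) '' spectrum ℂ Ahat) :=
        le_csSup hSbdd ⟨k, hk, rfl⟩
      rw [← ENNReal.ofReal_coe_nnreal]
      apply ENNReal.ofReal_le_ofReal
      simpa using this
    have h0 : 0 ≤ sSup ((fun z : ℂ => ‖z‖) '' spectrum ℂ Ahat) := by
      obtain ⟨x, hx⟩ := hSne
      exact le_trans (by rcases hx with ⟨z, hz, rfl⟩; positivity) (le_csSup hSbdd hx)
    calc (spectralRadius ℂ Ahat).toReal
        ≤ (ENNReal.ofReal (sSup ((fun z : ℂ => ‖z‖) '' spectrum ℂ Ahat))).toReal :=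
          ENNReal.toReal_mono ENNReal.ofReal_ne_top h2
      _ = _ := ENNReal.toReal_ofReal h0

lemma specRadMono {u : ℕ} (hu : 0 < u) {A A' : Matrix (Fin u) (Fin u) ℝ}
    (hA : ∀ i j, 0 ≤ A i j) (hA' : ∀ i j, 0 ≤ A' i j) (hle : ∀ i j, A i j ≤ A' i j) :
    specRad A ≤ specRad A' := by
  haveI : NeZero u := ⟨hu.ne'⟩
  letI : CompleteSpace (Matrix (Fin u) (Fin u) ℂ) := FiniteDimensional.complete ℂ _
  rw [specRadEq hu A, specRadEq hu A']
  have htop : spectralRadius ℂ (A'.map (fun x : ℝ => (x : ℂ))) ≠ ⊤ :=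
    ((spectrum.spectralRadius_le_nnnorm _).trans_lt ENNReal.coe_lt_top).ne
  apply ENNReal.toReal_mono htop
  apply le_of_tendsto_of_tendsto'
    (spectrum.pow_nnnorm_pow_one_div_tendsto_nhds_spectralRadius _)
    (spectrum.pow_nnnorm_pow_one_div_tendsto_nhds_spectralRadius _)
  intro n
  apply ENNReal.rpow_le_rpow _ (by positivity)
  rw [mapPow, mapPow]
  exact_mod_cast nnnormMapLe (entryPowNonneg hA n) (entryPowMono hA hA' hle n)

lemma diagNonneg {a : ℕ} {d : Fin a → ℝ} (hd : ∀ i, 0 ≤ d i) :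
    ∀ i j, 0 ≤ Matrix.diagonal d i j := by
  intro i j
  rw [Matrix.diagonal_apply]
  split
  · exact hd i
  · exact le_refl 0

end Aux

/-- the basic reproduction number is nondecreasing in the infected
residence-time matrix `P`. -/
theorem stmt0 (u v : ℕ) (hu : 1 ≤ u) (hv : 1 ≤ v)
    (Λ μ ν γ δ η : Fin u → ℝ)
    (hΛ : ∀ i, 0 < Λ i) (hμ : ∀ i, 0 < μ i) (hν : ∀ i, 0 < ν i) (hγ : ∀ i, 0 < γ i)
    (hδ : ∀ i, 0 ≤ δ i) (hη : ∀ i, 0 ≤ η i)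
    (B : Fin v → ℝ) (hB : ∀ j, 0 ≤ B j)
    (M P : Matrix (Fin u) (Fin v) ℝ)
    (hM : ∀ i j, 0 ≤ M i j) (hP : ∀ i j, 0 ≤ P i j)
    (Sstar : Fin u → ℝ) (hSstar : ∀ i, Sstar i = Λ i / μ i)
    (hMS : ∀ j, 0 < (Mᵀ *ᵥ Sstar) j)
    (P' : Matrix (Fin u) (Fin v) ℝ) (hP' : ∀ i j, 0 ≤ P' i j)
    (hPP' : ∀ i j, P i j ≤ P' i j) :
    specRad (NGM Sstar ν μ γ δ B M P) ≤ specRad (NGM Sstar ν μ γ δ B M P') := by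
  have hS : ∀ i, 0 ≤ Sstar i := fun i => by
    rw [hSstar i]; exact le_of_lt (div_pos (hΛ i) (hμ i))
  have hf : ∀ j, (0:ℝ) ≤ ((Mᵀ *ᵥ Sstar) j)⁻¹ := fun j => inv_nonneg.mpr (hMS j).le
  have hg : ∀ i, (0:ℝ) ≤ ((μ i + ν i) * (μ i + γ i + δ i))⁻¹ := fun i => by
    have h1 : 0 < μ i + ν i := add_pos (hμ i) (hν i)
    have h2 : 0 < μ i + γ i + δ i := add_pos_of_pos_of_nonneg (add_pos (hμ i) (hγ i)) (hδ i)
    exact inv_nonneg.mpr (mul_pos h1 h2).le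
  set X : Matrix (Fin u) (Fin u) ℝ := Matrix.diagonal Sstar * M * Matrix.diagonal B *
    Matrix.diagonal (fun j => ((Mᵀ *ᵥ Sstar) j)⁻¹) * Pᵀ with hX
  set X' : Matrix (Fin u) (Fin u) ℝ := Matrix.diagonal Sstar * M * Matrix.diagonal B *
    Matrix.diagonal (fun j => ((Mᵀ *ᵥ Sstar) j)⁻¹) * P'ᵀ with hX'
  have hC : ∀ i j, 0 ≤ (Matrix.diagonal Sstar * M * Matrix.diagonal B *
      Matrix.diagonal (fun j => ((Mᵀ *ᵥ Sstar) j)⁻¹)) i j :=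
    entryMulNonneg _ _
      (entryMulNonneg _ _ (entryMulNonneg _ _ (diagNonneg hS) hM) (diagNonneg hB))
      (diagNonneg hf)
  have hXnn : ∀ i j, 0 ≤ X i j := entryMulNonneg _ _ hC (fun i j => hP j i)
  have hX'nn : ∀ i j, 0 ≤ X' i j := entryMulNonneg _ _ hC (fun i j => hP' j i)
  have hXle : ∀ i j, X i j ≤ X' i j :=
    entryMulMonoRight _ hC (fun i j => hPP' j i)
  have hNnn : ∀ i j, 0 ≤ NGM Sstar ν μ γ δ B M P i j :=
    entryMulNonneg _ _ (entryMulNonneg _ _ hXnn (diagNonneg fun i => (hν i).le)) (diagNonneg hg)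
  have hN'nn : ∀ i j, 0 ≤ NGM Sstar ν μ γ δ B M P' i j :=
    entryMulNonneg _ _ (entryMulNonneg _ _ hX'nn (diagNonneg fun i => (hν i).le)) (diagNonneg hg)
  have hNle : ∀ i j, NGM Sstar ν μ γ δ B M P i j ≤ NGM Sstar ν μ γ δ B M P' i j :=
    entryMulMonoLeft _ (diagNonneg hg)
      (entryMulMonoLeft _ (diagNonneg fun i => (hν i).le) hXle)
  exact specRadMono hu hNnn hN'nn hNle
end

section
/- For every j with 1 ≤ j ≤ u, the j-th column sum of the next generation matrix satisfies Σ_{i=1}^{u} G(M,P,B)_{ij} = R0^j, where R0^j = (ν_j/((μ_j+ν_j)(μ_j+γ_j+δ_j))) · Σ_{k=1}^{v} β_k p_{jk}. -/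
open Matrix

/-- the `j`-th column sum of the next generation matrix equals
`R0^j = (ν_j/((μ_j+ν_j)(μ_j+γ_j+δ_j))) · Σ_k β_k p_{jk}`. -/
theorem stmt2 (u v : ℕ) (hu : 1 ≤ u) (hv : 1 ≤ v)
    (Λ μ ν γ δ η : Fin u → ℝ)
    (hΛ : ∀ i, 0 < Λ i) (hμ : ∀ i, 0 < μ i) (hν : ∀ i, 0 < ν i) (hγ : ∀ i, 0 < γ i)
    (hδ : ∀ i, 0 ≤ δ i) (hη : ∀ i, 0 ≤ η i)
    (B : Fin v → ℝ) (hB : ∀ j, 0 ≤ B j)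
    (M P : Matrix (Fin u) (Fin v) ℝ)
    (hM : ∀ i j, 0 ≤ M i j) (hP : ∀ i j, 0 ≤ P i j)
    (Sstar : Fin u → ℝ) (hSstar : ∀ i, Sstar i = Λ i / μ i)
    (hMS : ∀ j, 0 < (Mᵀ *ᵥ Sstar) j)
    :
    ∀ j, ∑ i : Fin u, NGM Sstar ν μ γ δ B M P i j =
      ν j / ((μ j + ν j) * (μ j + γ j + δ j)) * ∑ k : Fin v, B k * P j k := by
  intro j
  have key : ∀ k, ∑ i, Sstar i * M i k = (Mᵀ *ᵥ Sstar) k := by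
    intro k
    simp [Matrix.mulVec, dotProduct, Matrix.transpose_apply, mul_comm]
  simp only [NGM, Matrix.mul_apply, Matrix.diagonal_apply, Matrix.transpose_apply]
  simp only [mul_ite, ite_mul, mul_zero, zero_mul, Finset.sum_ite_eq, Finset.sum_ite_eq',
    Finset.mem_univ, if_true]
  simp only [Finset.sum_mul]
  rw [Finset.sum_comm, div_eq_mul_inv, Finset.mul_sum]
  refine Finset.sum_congr rfl fun k _ => ?_
  rw [← Finset.sum_mul, ← Finset.sum_mul, ← Finset.sum_mul, ← Finset.sum_mul,
    ← Finset.sum_mul, key k]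
  have h := (hMS k).ne'
  field_simp
end

section
/- For every i with 1 ≤ i ≤ u, the basic reproduction number dominates the group-specific quantity R̃0^i: ρ(G(M,P,B)) ≥ R̃0^i, where R̃0^i = (ν_i/((ν_i+μ_i)(γ_i+μ_i+δ_i))) · Σ_{j=1}^{v} β_j m_{ij} p_{ij} S*_i / (Σ_{k=1}^{u} m_{kj} S*_k). Consequently ρ(G(M,P,B)) ≥ max_{1≤i≤u} R̃0^i. -/
open Matrix

section aux

open Filter ENNReal

attribute [local instance] Matrix.linftyOpNormedRing Matrix.linftyOpNormedAlgebra

/-- Entries of powers of an entrywise nonnegative matrix are nonnegative, and the diagonal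
entry of a power dominates the power of the diagonal entry. -/
lemma pow_entry_le {n : Type*} [Fintype n] [DecidableEq n] (A : Matrix n n ℝ)
    (hA : ∀ i j, 0 ≤ A i j) (i : n) :
    ∀ m : ℕ, (∀ a b, 0 ≤ (A ^ m) a b) ∧ A i i ^ m ≤ (A ^ m) i i := by
  intro m
  induction m with
  | zero =>
    refine ⟨fun a b => ?_, by simp⟩
    rw [pow_zero, Matrix.one_apply]
    split <;> norm_num
  | succ m ih =>
    obtain ⟨h1, h2⟩ := ih
    refine ⟨fun a b => ?_, ?_⟩
    · rw [pow_succ, Matrix.mul_apply]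
      exact Finset.sum_nonneg fun k _ => mul_nonneg (h1 a k) (hA k b)
    · calc A i i ^ (m+1) = A i i ^ m * A i i := pow_succ _ _
        _ ≤ (A ^ m) i i * A i i := mul_le_mul_of_nonneg_right h2 (hA i i)
        _ ≤ ∑ k, (A ^ m) i k * A k i :=
            Finset.single_le_sum (f := fun k => (A ^ m) i k * A k i)
              (fun k _ => mul_nonneg (h1 i k) (hA k i)) (Finset.mem_univ i)
        _ = (A ^ (m+1)) i i := by rw [pow_succ, Matrix.mul_apply]

/-- The spectral radius of an entrywise nonnegative matrix dominates every diagonal entry. -/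
lemma diag_le_specRad {n : Type*} [Fintype n] [DecidableEq n] [Nonempty n]
    (A : Matrix n n ℝ) (hA : ∀ i j, 0 ≤ A i j) (i : n) :
    A i i ≤ specRad A := by
  classical
  set Ac : Matrix n n ℂ := A.map (fun x : ℝ => (x : ℂ)) with hAc
  have hmap : ∀ m : ℕ, Ac ^ m = (A ^ m).map (fun x : ℝ => (x : ℂ)) := by
    intro m
    have : Ac = Complex.ofRealHom.mapMatrix A := rfl
    rw [this, ← map_pow]
    rfl
  set c : NNReal := ⟨A i i, hA i i⟩ with hc
  -- spectral radius lower bound via Gelfand's formula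
  have hge : (c : ℝ≥0∞) ≤ spectralRadius ℂ Ac := by
    have htend := spectrum.pow_nnnorm_pow_one_div_tendsto_nhds_spectralRadius Ac
    refine ge_of_tendsto htend ?_
    rw [Filter.eventually_atTop]
    refine ⟨1, fun m hm => ?_⟩
    have h1 : (c : ℝ≥0∞) ^ (m : ℕ) ≤ (‖Ac ^ m‖₊ : ℝ≥0∞) := by
      have hentry : (c : ℝ) ^ m ≤ (A ^ m) i i := by
        exact (pow_entry_le A hA i m).2
      have hnorm : ‖(Ac ^ m) i i‖₊ ≤ ‖Ac ^ m‖₊ := by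
        rw [Matrix.linfty_opNNNorm_def]
        refine le_trans ?_ (Finset.le_sup (Finset.mem_univ i))
        exact Finset.single_le_sum (f := fun j => ‖(Ac ^ m) i j‖₊) (fun j _ => zero_le)
          (Finset.mem_univ i)
      have heq : ‖(Ac ^ m) i i‖₊ = ‖(A ^ m) i i‖₊ := by
        rw [hmap]; simp [Matrix.map_apply]
      have : c ^ m ≤ ‖(A ^ m) i i‖₊ := by
        rw [← NNReal.coe_le_coe]
        push_cast
        calc (c : ℝ) ^ m ≤ (A ^ m) i i := hentry
          _ ≤ |(A ^ m) i i| := le_abs_self _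
          _ = ‖(A ^ m) i i‖₊ := by simp [Real.nnnorm_abs, Real.norm_eq_abs]
      calc ((c : ℝ≥0∞)) ^ m = ((c ^ m : NNReal) : ℝ≥0∞) := by push_cast; ring
        _ ≤ (‖(A ^ m) i i‖₊ : ℝ≥0∞) := by exact_mod_cast this
        _ = (‖(Ac ^ m) i i‖₊ : ℝ≥0∞) := by rw [heq]
        _ ≤ _ := by exact_mod_cast hnorm
    calc (c : ℝ≥0∞) = ((c : ℝ≥0∞) ^ (m : ℕ)) ^ (1 / (m : ℝ)) := by
          rw [← ENNReal.rpow_natCast, ← ENNReal.rpow_mul]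
          rw [mul_one_div, div_self (Nat.cast_ne_zero.mpr (by omega) : (m:ℝ) ≠ 0),
            ENNReal.rpow_one]
      _ ≤ (‖Ac ^ m‖₊ : ℝ≥0∞) ^ (1 / (m : ℝ)) := ENNReal.rpow_le_rpow h1 (by positivity)
  -- the spectral radius is attained on the (nonempty) spectrum
  obtain ⟨z, hz, hznorm⟩ := spectrum.exists_nnnorm_eq_spectralRadius Ac
  have hzc : c ≤ ‖z‖₊ := by
    rw [← ENNReal.coe_le_coe, hznorm]; exact hge
  have hbdd : BddAbove ((fun z : ℂ => ‖z‖) '' spectrum ℂ Ac) :=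
    ((spectrum.isCompact Ac).image continuous_norm).bddAbove
  calc A i i = (c : ℝ) := rfl
    _ ≤ ‖z‖ := hzc
    _ = ‖z‖ := rfl
    _ ≤ specRad A := le_csSup hbdd ⟨z, hz, rfl⟩

end aux

/-- The entries of the next generation matrix. -/
lemma NGM_apply {u v : ℕ} (Sstar ν μ γ δ : Fin u → ℝ) (B : Fin v → ℝ)
    (M P : Matrix (Fin u) (Fin v) ℝ) (i k : Fin u) :
    NGM Sstar ν μ γ δ B M P i k =
      Sstar i * (∑ j, M i j * B j * ((Mᵀ *ᵥ Sstar) j)⁻¹ * P k j) * ν k *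
        ((μ k + ν k) * (μ k + γ k + δ k))⁻¹ := by
  rw [NGM, Matrix.mul_diagonal, Matrix.mul_diagonal, Matrix.mul_apply]
  simp only [Matrix.mul_diagonal, Matrix.diagonal_mul, Matrix.transpose_apply]
  rw [show (∑ j, Sstar i * M i j * B j * ((Mᵀ *ᵥ Sstar) j)⁻¹ * P k j)
      = Sstar i * ∑ j, M i j * B j * ((Mᵀ *ᵥ Sstar) j)⁻¹ * P k j by
    rw [Finset.mul_sum]; exact Finset.sum_congr rfl fun j _ => by ring]

/-- the basic reproduction number dominates each group-specific
quantity `R̃0^i`, hence also their maximum. -/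
theorem stmt3 (u v : ℕ) (hu : 1 ≤ u) (hv : 1 ≤ v)
    (Λ μ ν γ δ η : Fin u → ℝ)
    (hΛ : ∀ i, 0 < Λ i) (hμ : ∀ i, 0 < μ i) (hν : ∀ i, 0 < ν i) (hγ : ∀ i, 0 < γ i)
    (hδ : ∀ i, 0 ≤ δ i) (hη : ∀ i, 0 ≤ η i)
    (B : Fin v → ℝ) (hB : ∀ j, 0 ≤ B j)
    (M P : Matrix (Fin u) (Fin v) ℝ)
    (hM : ∀ i j, 0 ≤ M i j) (hP : ∀ i j, 0 ≤ P i j)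
    (Sstar : Fin u → ℝ) (hSstar : ∀ i, Sstar i = Λ i / μ i)
    (hMS : ∀ j, 0 < (Mᵀ *ᵥ Sstar) j)
    :
    (∀ i : Fin u,
      ν i / ((ν i + μ i) * (γ i + μ i + δ i)) *
          ∑ j : Fin v, B j * M i j * P i j * Sstar i / (∑ k : Fin u, M k j * Sstar k) ≤
        specRad (NGM Sstar ν μ γ δ B M P)) ∧
    (⨆ i : Fin u, ν i / ((ν i + μ i) * (γ i + μ i + δ i)) *
          ∑ j : Fin v, B j * M i j * P i j * Sstar i / (∑ k : Fin u, M k j * Sstar k)) ≤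
      specRad (NGM Sstar ν μ γ δ B M P) := by
  haveI : Nonempty (Fin u) := ⟨⟨0, hu⟩⟩
  have hS : ∀ i, 0 ≤ Sstar i := fun i => by
    rw [hSstar i]; exact le_of_lt (div_pos (hΛ i) (hμ i))
  -- nonnegativity of the entries of the next generation matrix
  have hnn : ∀ i k, 0 ≤ NGM Sstar ν μ γ δ B M P i k := by
    intro i k
    rw [NGM_apply]
    have hsum : 0 ≤ ∑ j, M i j * B j * ((Mᵀ *ᵥ Sstar) j)⁻¹ * P k j :=
      Finset.sum_nonneg fun j _ => mul_nonneg (mul_nonneg (mul_nonneg (hM i j) (hB j))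
        (le_of_lt (inv_pos.mpr (hMS j)))) (hP k j)
    have hd : 0 ≤ ((μ k + ν k) * (μ k + γ k + δ k))⁻¹ := by
      have := hμ k; have := hν k; have := hγ k; have := hδ k
      positivity
    exact mul_nonneg (mul_nonneg (mul_nonneg (hS i) hsum) (le_of_lt (hν k))) hd
  have hmvec : ∀ j, (Mᵀ *ᵥ Sstar) j = ∑ k, M k j * Sstar k := fun j => by
    simp [Matrix.mulVec, dotProduct, Matrix.transpose_apply]
  have key : ∀ i : Fin u,
      ν i / ((ν i + μ i) * (γ i + μ i + δ i)) *
          ∑ j : Fin v, B j * M i j * P i j * Sstar i / (∑ k : Fin u, M k j * Sstar k) ≤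
        specRad (NGM Sstar ν μ γ δ B M P) := by
    intro i
    have hEq : ν i / ((ν i + μ i) * (γ i + μ i + δ i)) *
          ∑ j : Fin v, B j * M i j * P i j * Sstar i / (∑ k : Fin u, M k j * Sstar k)
        = NGM Sstar ν μ γ δ B M P i i := by
      rw [NGM_apply]
      simp_rw [hmvec]
      rw [show (ν i + μ i) * (γ i + μ i + δ i) = (μ i + ν i) * (μ i + γ i + δ i) by ring]
      rw [Finset.mul_sum, Finset.mul_sum, Finset.sum_mul, Finset.sum_mul]
      exact Finset.sum_congr rfl fun j _ => by ring
    rw [hEq]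
    exact diag_le_specRad _ hnn i
  exact ⟨key, ciSup_le key⟩
end

section
/- Assume additionally that all entries of B are positive and that the u×u matrix M·Pᵀ is irreducible (i.e., for every pair (i,j) there exists an integer n ≥ 1 with ((MPᵀ)^n)_{ij} > 0). Then min_{1≤i≤u} R0^i ≤ ρ(G(M,P,B)) ≤ max_{1≤i≤u} R0^i, where R0^i = (ν_i/((μ_i+ν_i)(μ_i+γ_i+δ_i))) · Σ_{k=1}^{v} β_k p_{ik}. -/
open Matrix
open scoped ENNReal NNReal

section Aux

attribute [local instance] Matrix.linftyOpNormedRing Matrix.linftyOpNormedAlgebra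

/-- Eigenvector extraction from spectrum membership for complex matrices. -/
lemma exists_eigenvector_of_mem_spectrum {u : ℕ} {A : Matrix (Fin u) (Fin u) ℂ} {lam : ℂ}
    (h : lam ∈ spectrum ℂ A) : ∃ v, v ≠ 0 ∧ A *ᵥ v = lam • v := by
  rw [spectrum.mem_iff] at h
  have hdet : (algebraMap ℂ (Matrix (Fin u) (Fin u) ℂ) lam - A).det = 0 := by
    by_contra hd
    exact h ((Matrix.isUnit_iff_isUnit_det _).mpr (isUnit_iff_ne_zero.mpr hd))
  obtain ⟨v, hv0, hv⟩ := Matrix.exists_mulVec_eq_zero_iff.mpr hdet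
  refine ⟨v, hv0, ?_⟩
  rw [Matrix.sub_mulVec, sub_eq_zero, Algebra.algebraMap_eq_smul_one,
    Matrix.smul_mulVec, Matrix.one_mulVec] at hv
  exact hv.symm

/-- Any complex eigenvalue of a nonnegative real matrix is bounded in modulus by the
maximal column sum. -/
lemma abs_le_iSup_colSum {u : ℕ} (hu : 1 ≤ u) (G : Matrix (Fin u) (Fin u) ℝ)
    (hG : ∀ i j, 0 ≤ G i j) (r : Fin u → ℝ) (hc : ∀ j, ∑ i, G i j = r j)
    {lam : ℂ} (hlam : lam ∈ spectrum ℂ (G.map (fun x : ℝ => (x : ℂ)))) :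
    ‖lam‖ ≤ ⨆ j, r j := by
  haveI : Nonempty (Fin u) := ⟨⟨0, hu⟩⟩
  have hrmax : ∀ j, r j ≤ ⨆ j, r j := fun j =>
    le_ciSup (Set.Finite.bddAbove (Set.finite_range r)) j
  obtain ⟨v, hv0, hv⟩ := exists_eigenvector_of_mem_spectrum hlam
  have key : ∀ i, ‖lam‖ * ‖v i‖ ≤ ∑ j, G i j * ‖v j‖ := by
    intro i
    have h1 : lam * v i = ∑ j, (G i j : ℂ) * v j := by
      have := congrFun hv i
      simpa [Matrix.mulVec, dotProduct, Matrix.map_apply, Pi.smul_apply,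
        smul_eq_mul] using this.symm
    calc ‖lam‖ * ‖v i‖ = ‖lam * v i‖ := (norm_mul _ _).symm
      _ = ‖∑ j, (G i j : ℂ) * v j‖ := by rw [h1]
      _ ≤ ∑ j, ‖(G i j : ℂ) * v j‖ := norm_sum_le _ _
      _ = ∑ j, G i j * ‖v j‖ := by
          refine Finset.sum_congr rfl fun j _ => ?_
          rw [norm_mul, Complex.norm_real, Real.norm_eq_abs, abs_of_nonneg (hG i j)]
  have hsum : ‖lam‖ * ∑ i, ‖v i‖ ≤ (⨆ j, r j) * ∑ i, ‖v i‖ := by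
    calc ‖lam‖ * ∑ i, ‖v i‖ = ∑ i, ‖lam‖ * ‖v i‖ := by
          rw [Finset.mul_sum]
      _ ≤ ∑ i, ∑ j, G i j * ‖v j‖ := Finset.sum_le_sum fun i _ => key i
      _ = ∑ j, (∑ i, G i j) * ‖v j‖ := by
          rw [Finset.sum_comm]
          exact Finset.sum_congr rfl fun j _ => (Finset.sum_mul _ _ _).symm
      _ = ∑ j, r j * ‖v j‖ := by simp_rw [hc]
      _ ≤ ∑ j, (⨆ j, r j) * ‖v j‖ :=
          Finset.sum_le_sum fun j _ => mul_le_mul_of_nonneg_right (hrmax j) (norm_nonneg _)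
      _ = (⨆ j, r j) * ∑ i, ‖v i‖ := by rw [Finset.mul_sum]
  have hpos : 0 < ∑ i, ‖v i‖ := by
    obtain ⟨i, hi⟩ := Function.ne_iff.mp hv0
    exact Finset.sum_pos' (fun j _ => norm_nonneg _)
      ⟨i, Finset.mem_univ i, norm_pos_iff.mpr hi⟩
  exact le_of_mul_le_mul_right hsum hpos

/-- The minimal column sum of a nonnegative matrix bounds the spectral radius from below. -/
lemma iInf_colSum_le_specRad {u : ℕ} (hu : 1 ≤ u) (G : Matrix (Fin u) (Fin u) ℝ)
    (hG : ∀ i j, 0 ≤ G i j) (r : Fin u → ℝ) (hc : ∀ j, ∑ i, G i j = r j) :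
    (⨅ j, r j) ≤ specRad G := by
  haveI : Nonempty (Fin u) := ⟨⟨0, hu⟩⟩
  haveI : CompleteSpace (Matrix (Fin u) (Fin u) ℂ) := FiniteDimensional.complete ℂ _
  set A : Matrix (Fin u) (Fin u) ℂ := G.map (fun x : ℝ => (x : ℂ)) with hA
  set ρ : ℝ := ⨅ j, r j with hρ
  have hr0 : ∀ j, 0 ≤ r j := fun j => (hc j) ▸ Finset.sum_nonneg fun i _ => hG i j
  have hρ0 : 0 ≤ ρ := Real.iInf_nonneg hr0
  have hρle : ∀ j, ρ ≤ r j := fun j => ciInf_le (Set.Finite.bddBelow (Set.finite_range r)) j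
  -- nonnegativity of powers
  have hGn : ∀ n, ∀ i j, 0 ≤ (G ^ n) i j := by
    intro n
    induction n with
    | zero => intro i j; simp [Matrix.one_apply]; positivity
    | succ n ih =>
      intro i j
      rw [pow_succ, Matrix.mul_apply]
      exact Finset.sum_nonneg fun k _ => mul_nonneg (ih i k) (hG k j)
  -- column sums of powers
  have hcs : ∀ n, ∀ j, ρ ^ n ≤ ∑ i, (G ^ n) i j := by
    intro n
    induction n with
    | zero => intro j; simp [Matrix.one_apply]
    | succ n ih =>
      intro j
      have : ∑ i, (G ^ (n + 1)) i j = ∑ k, (∑ i, (G ^ n) i k) * G k j := by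
        simp_rw [pow_succ, Matrix.mul_apply]
        rw [Finset.sum_comm]
        exact Finset.sum_congr rfl fun k _ => (Finset.sum_mul _ _ _).symm
      rw [this, pow_succ]
      calc ρ ^ n * ρ ≤ ρ ^ n * r j := mul_le_mul_of_nonneg_left (hρle j) (pow_nonneg hρ0 n)
        _ = ρ ^ n * ∑ k, G k j := by rw [hc j]
        _ = ∑ k, ρ ^ n * G k j := Finset.mul_sum _ _ _
        _ ≤ ∑ k, (∑ i, (G ^ n) i k) * G k j :=
            Finset.sum_le_sum fun k _ => mul_le_mul_of_nonneg_right (ih k) (hG k j)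
  -- norm bound : ρ ^ n ≤ ‖A ^ n‖
  have hnorm : ∀ n, ρ ^ n ≤ ‖A ^ n‖ := by
    intro n
    have hpow : A ^ n = (G ^ n).map (fun x : ℝ => (x : ℂ)) := by
      have : A = (algebraMap ℝ ℂ).mapMatrix G := rfl
      rw [this, ← map_pow]; rfl
    have htot : (↑u : ℝ) * ρ ^ n ≤ ∑ i, ∑ j, (G ^ n) i j := by
      refine le_of_le_of_eq ?_ Finset.sum_comm
      calc (↑u : ℝ) * ρ ^ n = ∑ _j : Fin u, ρ ^ n := by
            simp [Finset.sum_const, Finset.card_univ]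
        _ ≤ ∑ j, ∑ i, (G ^ n) i j := Finset.sum_le_sum fun j _ => hcs n j
    obtain ⟨i, -, hi⟩ := Finset.exists_le_of_sum_le (Finset.univ_nonempty)
      (show ∑ _i : Fin u, ρ ^ n ≤ ∑ i, ∑ j, (G ^ n) i j by
        simpa [Finset.sum_const, Finset.card_univ, nsmul_eq_mul] using htot)
    have hrow : ∑ j, (G ^ n) i j ≤ ‖A ^ n‖ := by
      rw [Matrix.linfty_opNorm_def]
      have hle : (∑ j, ‖(A ^ n) i j‖₊) ≤ (Finset.univ : Finset (Fin u)).sup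
          fun i => ∑ j, ‖(A ^ n) i j‖₊ := Finset.le_sup (f := fun i => ∑ j, ‖(A ^ n) i j‖₊) (Finset.mem_univ i)
      calc ∑ j, (G ^ n) i j = ((∑ j, ‖(A ^ n) i j‖₊ : NNReal) : ℝ) := by
            push_cast
            refine Finset.sum_congr rfl fun j _ => ?_
            rw [hpow]
            simp only [Matrix.map_apply, coe_nnnorm, Complex.norm_real,
              Real.norm_eq_abs, abs_of_nonneg (hGn n i j)]
        _ ≤ _ := by exact_mod_cast hle
    exact hi.trans hrow
  -- Gelfand's formula
  have hgel := spectrum.pow_nnnorm_pow_one_div_tendsto_nhds_spectralRadius A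
  have hlow : ENNReal.ofReal ρ ≤ spectralRadius ℂ A := by
    refine ge_of_tendsto hgel ?_
    filter_upwards [Filter.eventually_ge_atTop 1] with n hn
    have hne : (n : ℝ) ≠ 0 := Nat.cast_ne_zero.mpr (Nat.one_le_iff_ne_zero.mp hn)
    have h1 : (ENNReal.ofReal ρ) ^ n ≤ (‖A ^ n‖₊ : ℝ≥0∞) := by
      rw [← ENNReal.ofReal_pow hρ0, ← ENNReal.ofReal_coe_nnreal, coe_nnnorm]
      exact ENNReal.ofReal_le_ofReal (hnorm n)
    calc ENNReal.ofReal ρ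
        = ((ENNReal.ofReal ρ) ^ n) ^ (1 / (n : ℝ)) := by
          rw [← ENNReal.rpow_natCast, ← ENNReal.rpow_mul, mul_one_div, div_self hne,
            ENNReal.rpow_one]
      _ ≤ (‖A ^ n‖₊ : ℝ≥0∞) ^ (1 / (n : ℝ)) :=
          ENNReal.rpow_le_rpow h1 (by positivity)
  -- extract a maximal-modulus eigenvalue
  have hfin : (spectrum ℂ A).Finite := Matrix.finite_spectrum A
  have hne : (spectrum ℂ A).Nonempty := spectrum.nonempty A
  obtain ⟨m, hm, hmax⟩ : ∃ m ∈ spectrum ℂ A, ∀ k ∈ spectrum ℂ A,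
      ‖k‖ ≤ ‖m‖ := by
    exact Set.exists_max_image _ (fun z : ℂ => ‖z‖) hfin hne
  have hsrle : spectralRadius ℂ A ≤ (‖m‖₊ : ℝ≥0∞) := by
    rw [spectralRadius]
    refine iSup₂_le fun k hk => ENNReal.coe_le_coe.mpr ?_
    have hk' : ‖k‖ ≤ ‖m‖ := by
      exact hmax k hk
    rwa [← NNReal.coe_le_coe, coe_nnnorm, coe_nnnorm]
  have hρm : ρ ≤ ‖m‖ := by
    have := hlow.trans hsrle
    rw [← ENNReal.ofReal_coe_nnreal, coe_nnnorm, ENNReal.ofReal_le_ofReal_iff (norm_nonneg _)] at this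
    exact this
  refine hρm.trans ?_
  exact le_csSup ((hfin.image (fun z : ℂ => ‖z‖)).bddAbove) ⟨m, hm, rfl⟩

end Aux

/-- under positivity of `B` and irreducibility of `M·Pᵀ`, the basic
reproduction number lies between the minimal and maximal group reproduction
numbers `R0^i`. -/
theorem stmt4 (u v : ℕ) (hu : 1 ≤ u) (hv : 1 ≤ v)
    (Λ μ ν γ δ η : Fin u → ℝ)
    (hΛ : ∀ i, 0 < Λ i) (hμ : ∀ i, 0 < μ i) (hν : ∀ i, 0 < ν i) (hγ : ∀ i, 0 < γ i)
    (hδ : ∀ i, 0 ≤ δ i) (hη : ∀ i, 0 ≤ η i)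
    (B : Fin v → ℝ) (hB : ∀ j, 0 ≤ B j)
    (M P : Matrix (Fin u) (Fin v) ℝ)
    (hM : ∀ i j, 0 ≤ M i j) (hP : ∀ i j, 0 ≤ P i j)
    (Sstar : Fin u → ℝ) (hSstar : ∀ i, Sstar i = Λ i / μ i)
    (hMS : ∀ j, 0 < (Mᵀ *ᵥ Sstar) j)
    (hBpos : ∀ j, 0 < B j)
    (hirr : ∀ i j : Fin u, ∃ n : ℕ, 1 ≤ n ∧ 0 < ((M * Pᵀ) ^ n) i j) :
    (⨅ i : Fin u, ν i / ((μ i + ν i) * (μ i + γ i + δ i)) * ∑ k : Fin v, B k * P i k) ≤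
        specRad (NGM Sstar ν μ γ δ B M P) ∧
      specRad (NGM Sstar ν μ γ δ B M P) ≤
        ⨆ i : Fin u, ν i / ((μ i + ν i) * (μ i + γ i + δ i)) * ∑ k : Fin v, B k * P i k := by
  haveI : Nonempty (Fin u) := ⟨⟨0, hu⟩⟩
  set G := NGM Sstar ν μ γ δ B M P with hGdef
  set r : Fin u → ℝ :=
    fun i => ν i / ((μ i + ν i) * (μ i + γ i + δ i)) * ∑ k : Fin v, B k * P i k with hrdef
  have hSpos : ∀ i, 0 < Sstar i := fun i => (hSstar i) ▸ div_pos (hΛ i) (hμ i)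
  have hentry : ∀ i j, G i j =
      (∑ k, Sstar i * M i k * B k * ((Mᵀ *ᵥ Sstar) k)⁻¹ * P j k) *
        (ν j * ((μ j + ν j) * (μ j + γ j + δ j))⁻¹) := by
    intro i j
    rw [hGdef, NGM, Matrix.mul_diagonal, Matrix.mul_diagonal, Matrix.mul_apply,
      Finset.sum_mul, Finset.sum_mul, Finset.sum_mul]
    refine Finset.sum_congr rfl fun k _ => ?_
    simp only [Matrix.mul_diagonal, Matrix.diagonal_mul, Matrix.transpose_apply]
    ring
  have hG : ∀ i j, 0 ≤ G i j := by
    intro i j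
    rw [hentry i j]
    have h1 : 0 ≤ ν j * ((μ j + ν j) * (μ j + γ j + δ j))⁻¹ := by
      have := hμ j; have := hν j; have := hγ j; have := hδ j
      positivity
    refine mul_nonneg (Finset.sum_nonneg fun k _ => ?_) h1
    have := hSpos i; have := hM i k; have := hB k; have := hMS k; have := hP j k
    positivity
  have hc : ∀ j, ∑ i, G i j = r j := by
    intro j
    simp_rw [hentry]
    rw [← Finset.sum_mul, Finset.sum_comm]
    have : ∀ k, ∑ i, Sstar i * M i k * B k * ((Mᵀ *ᵥ Sstar) k)⁻¹ * P j k
        = B k * P j k := by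
      intro k
      have hMv : ∑ i, Sstar i * M i k = (Mᵀ *ᵥ Sstar) k := by
        simp [Matrix.mulVec, dotProduct, Matrix.transpose_apply, mul_comm]
      calc ∑ i, Sstar i * M i k * B k * ((Mᵀ *ᵥ Sstar) k)⁻¹ * P j k
          = (∑ i, Sstar i * M i k) * (B k * ((Mᵀ *ᵥ Sstar) k)⁻¹ * P j k) := by
            rw [Finset.sum_mul]; refine Finset.sum_congr rfl fun i _ => by ring
        _ = B k * P j k := by
            rw [hMv]
            field_simp [(hMS k).ne']
    simp_rw [this]
    show _ = ν j / ((μ j + ν j) * (μ j + γ j + δ j)) * ∑ k : Fin v, B k * P j k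
    rw [div_eq_mul_inv]
    ring
  constructor
  · exact iInf_colSum_le_specRad hu G hG r hc
  · have hr0 : ∀ j, 0 ≤ r j := fun j => (hc j) ▸ Finset.sum_nonneg fun i _ => hG i j
    refine Real.sSup_le ?_ ((hr0 ⟨0, hu⟩).trans
      (le_ciSup (Set.Finite.bddAbove (Set.finite_range r)) ⟨0, hu⟩))
    rintro x ⟨lam, hlam, rfl⟩
    exact abs_le_iSup_colSum hu G hG r hc hlam
end

section
/- Assume additionally that all entries of B are positive and that the u×u matrix M·Pᵀ is irreducible (i.e., for every pair (i,j) there exists an integer n ≥ 1 with ((MPᵀ)^n)_{ij} > 0). Then ρ(G(M,P,B)) ≥ min_{1≤i≤u} R0^i, where R0^i = (ν_i/((μ_i+ν_i)(μ_i+γ_i+δ_i))) · Σ_{k=1}^{v} β_k p_{ik}; moreover, for every group i and every patch j, R0^i ≥ ν_i β_j p_{ij}/((μ_i+ν_i)(μ_i+γ_i+δ_i)). In particular the u-group v-patch reproduction number dominates a single-group v-patch reproduction number, which dominates the corresponding single-group single-patch reproduction number. -/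
open Matrix

section AuxSpecRad
attribute [local instance] Matrix.linftyOpNormedRing Matrix.linftyOpNormedAlgebra

lemma spectrum_transpose_aux {u : ℕ} (A : Matrix (Fin u) (Fin u) ℂ) :
    spectrum ℂ Aᵀ = spectrum ℂ A := by
  ext z
  simp only [spectrum.mem_iff, not_iff_not, Algebra.algebraMap_eq_smul_one]
  have key : (z • (1 : Matrix (Fin u) (Fin u) ℂ) - A)ᵀ = z • 1 - Aᵀ := by
    simp [Matrix.transpose_sub, Matrix.transpose_smul, Matrix.transpose_one]
  rw [← key, Matrix.isUnit_iff_isUnit_det, Matrix.isUnit_iff_isUnit_det, Matrix.det_transpose]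

lemma pow_nonneg_rowsum_aux {u : ℕ} (A : Matrix (Fin u) (Fin u) ℝ)
    (hA : ∀ i j, 0 ≤ A i j) (r : ℝ) (hr : 0 ≤ r) (hrow : ∀ i, r ≤ ∑ j, A i j) (n : ℕ) :
    (∀ i j, 0 ≤ (A ^ n) i j) ∧ ∀ i, r ^ n ≤ ∑ j, (A ^ n) i j := by
  induction n with
  | zero =>
    refine ⟨fun i j => ?_, fun i => ?_⟩
    · simp [Matrix.one_apply]; positivity
    · simp [Matrix.one_apply]
  | succ n ih =>
    obtain ⟨h1, h2⟩ := ih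
    refine ⟨fun i j => ?_, fun i => ?_⟩
    · rw [pow_succ, Matrix.mul_apply]
      exact Finset.sum_nonneg fun k _ => mul_nonneg (h1 i k) (hA k j)
    · rw [pow_succ]
      calc r ^ (n + 1) = r ^ n * r := by ring
        _ ≤ ∑ k, (A ^ n) i k * r := by
            calc r ^ n * r ≤ (∑ k, (A ^ n) i k) * r :=
              mul_le_mul_of_nonneg_right (h2 i) hr
            _ = ∑ k, (A ^ n) i k * r := Finset.sum_mul ..
        _ ≤ ∑ k, (A ^ n) i k * (∑ j, A k j) :=
            Finset.sum_le_sum fun k _ => mul_le_mul_of_nonneg_left (hrow k) (h1 i k)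
        _ = ∑ j, ∑ k, (A ^ n) i k * A k j := by
            rw [Finset.sum_comm]; simp [Finset.mul_sum]
        _ = ∑ j, (A ^ n * A) i j := by simp [Matrix.mul_apply]

/-- Key Perron–Frobenius-type bound: for a nonnegative matrix, any common lower
bound on the column sums is a lower bound for the spectral radius. -/
lemma le_specRad_of_colsum_aux {u : ℕ} [NeZero u] (A : Matrix (Fin u) (Fin u) ℝ)
    (hA : ∀ i j, 0 ≤ A i j) (r : ℝ) (hr : 0 ≤ r) (hcol : ∀ j, r ≤ ∑ i, A i j) :
    r ≤ specRad A := by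
  have hTnn : ∀ i j, 0 ≤ Aᵀ i j := fun i j => hA j i
  have hTrow : ∀ i, r ≤ ∑ j, Aᵀ i j := fun i => hcol i
  set a : Matrix (Fin u) (Fin u) ℂ := Aᵀ.map (fun x : ℝ => (x : ℂ)) with ha
  have hnorm : ∀ n : ℕ, (r : ℝ) ^ n ≤ ‖a ^ n‖ := by
    intro n
    have hmap : a ^ n = (Aᵀ ^ n).map (fun x : ℝ => (x : ℂ)) := by
      have : a = (Complex.ofRealHom.mapMatrix : Matrix (Fin u) (Fin u) ℝ →+* _) Aᵀ := rfl
      rw [this, ← map_pow]; rfl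
    obtain ⟨h1, h2⟩ := pow_nonneg_rowsum_aux Aᵀ hTnn r hr hTrow n
    have i0 : Fin u := ⟨0, Nat.pos_of_ne_zero (NeZero.ne u)⟩
    have hrow_norm : (r : ℝ) ^ n ≤ ∑ j, ‖(a ^ n) i0 j‖ := by
      rw [hmap]
      calc r ^ n ≤ ∑ j, (Aᵀ ^ n) i0 j := h2 i0
        _ = ∑ j, ‖((((Aᵀ ^ n) i0 j : ℝ)) : ℂ)‖ := by
            refine Finset.sum_congr rfl fun j _ => ?_
            rw [Complex.norm_real, Real.norm_eq_abs, abs_of_nonneg (h1 i0 j)]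
        _ = ∑ j, ‖((Aᵀ ^ n).map (fun x : ℝ => (x : ℂ))) i0 j‖ := rfl
    refine hrow_norm.trans ?_
    rw [Matrix.linfty_opNorm_def]
    have hsup : ∑ j, ‖(a ^ n) i0 j‖₊ ≤ Finset.univ.sup fun i => ∑ j, ‖(a ^ n) i j‖₊ :=
      Finset.le_sup (f := fun i => ∑ j, ‖(a ^ n) i j‖₊) (Finset.mem_univ i0)
    calc ∑ j, ‖(a ^ n) i0 j‖ = ((∑ j, ‖(a ^ n) i0 j‖₊ : NNReal) : ℝ) := by
          push_cast; rfl
      _ ≤ _ := by exact_mod_cast hsup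
  have htend := spectrum.pow_nnnorm_pow_one_div_tendsto_nhds_spectralRadius a
  have hle : ENNReal.ofReal r ≤ spectralRadius ℂ a := by
    refine ge_of_tendsto htend ?_
    filter_upwards [Filter.eventually_gt_atTop 0] with n hn
    have h1 : ENNReal.ofReal (r ^ n) ≤ (‖a ^ n‖₊ : ENNReal) := by
      rw [← ENNReal.ofReal_coe_nnreal, coe_nnnorm]
      exact ENNReal.ofReal_le_ofReal (hnorm n)
    have h2 : ENNReal.ofReal r = (ENNReal.ofReal (r ^ n)) ^ (1 / n : ℝ) := by
      rw [ENNReal.ofReal_pow hr, ← ENNReal.rpow_natCast, ← ENNReal.rpow_mul]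
      have hne : (n : ℝ) ≠ 0 := Nat.cast_ne_zero.mpr hn.ne'
      have : (n : ℝ) * (1 / n) = 1 := by field_simp
      rw [this, ENNReal.rpow_one]
    rw [h2]
    exact ENNReal.rpow_le_rpow h1 (by positivity)
  have hspec : spectrum ℂ a = spectrum ℂ (A.map (fun x : ℝ => (x : ℂ))) := by
    have h : a = (A.map (fun x : ℝ => (x : ℂ)))ᵀ := by ext i j; rfl
    rw [h, spectrum_transpose_aux]
  have hbdd : BddAbove ((fun z : ℂ => ‖z‖) '' spectrum ℂ (A.map (fun x : ℝ => (x : ℂ)))) := by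
    have hcpt : IsCompact (spectrum ℂ a) := spectrum.isCompact a
    rw [← hspec]
    exact (hcpt.image continuous_norm).bddAbove
  have hfinal : ∀ k ∈ spectrum ℂ a, ‖k‖ ≤ specRad A := by
    intro k hk
    exact le_csSup hbdd ⟨k, hspec ▸ hk, rfl⟩
  have hub : spectralRadius ℂ a ≤ ENNReal.ofReal (specRad A) := by
    rw [spectralRadius]
    refine iSup₂_le fun k hk => ?_
    rw [← ENNReal.ofReal_coe_nnreal, coe_nnnorm]
    exact ENNReal.ofReal_le_ofReal (hfinal k hk)
  have hne : (spectrum ℂ a).Nonempty := spectrum.nonempty a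
  have hpos : 0 ≤ specRad A := by
    obtain ⟨k, hk⟩ := hne
    exact (norm_nonneg k).trans (hfinal k hk)
  have hh := hle.trans hub
  rwa [ENNReal.ofReal_le_ofReal_iff hpos] at hh

end AuxSpecRad

/-- the basic reproduction number dominates the minimal group
reproduction number `R0^i`, and each `R0^i` dominates every single-patch
quantity `ν_i β_j p_{ij}/((μ_i+ν_i)(μ_i+γ_i+δ_i))`. -/
theorem stmt5 (u v : ℕ) (hu : 1 ≤ u) (hv : 1 ≤ v)
    (Λ μ ν γ δ η : Fin u → ℝ)
    (hΛ : ∀ i, 0 < Λ i) (hμ : ∀ i, 0 < μ i) (hν : ∀ i, 0 < ν i) (hγ : ∀ i, 0 < γ i)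
    (hδ : ∀ i, 0 ≤ δ i) (hη : ∀ i, 0 ≤ η i)
    (B : Fin v → ℝ) (hB : ∀ j, 0 ≤ B j)
    (M P : Matrix (Fin u) (Fin v) ℝ)
    (hM : ∀ i j, 0 ≤ M i j) (hP : ∀ i j, 0 ≤ P i j)
    (Sstar : Fin u → ℝ) (hSstar : ∀ i, Sstar i = Λ i / μ i)
    (hMS : ∀ j, 0 < (Mᵀ *ᵥ Sstar) j)
    (hBpos : ∀ j, 0 < B j)
    (hirr : ∀ i j : Fin u, ∃ n : ℕ, 1 ≤ n ∧ 0 < ((M * Pᵀ) ^ n) i j) :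
    (⨅ i : Fin u, ν i / ((μ i + ν i) * (μ i + γ i + δ i)) * ∑ k : Fin v, B k * P i k) ≤
        specRad (NGM Sstar ν μ γ δ B M P) ∧
      ∀ i : Fin u, ∀ j : Fin v,
        ν i * B j * P i j / ((μ i + ν i) * (μ i + γ i + δ i)) ≤
          ν i / ((μ i + ν i) * (μ i + γ i + δ i)) * ∑ k : Fin v, B k * P i k := by
  haveI : NeZero u := ⟨by omega⟩
  set D : Fin u → ℝ := fun i => (μ i + ν i) * (μ i + γ i + δ i) with hD
  have hDpos : ∀ i, 0 < D i := fun i =>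
    mul_pos (by linarith [hμ i, hν i]) (by linarith [hμ i, hγ i, hδ i])
  set R0 : Fin u → ℝ := fun i => ν i / D i * ∑ k : Fin v, B k * P i k with hR0
  have hR0nn : ∀ i, 0 ≤ R0 i := fun i =>
    mul_nonneg (div_nonneg (hν i).le (hDpos i).le)
      (Finset.sum_nonneg fun k _ => mul_nonneg (hB k) (hP i k))
  have hSnn : ∀ i, 0 ≤ Sstar i := fun i => by
    rw [hSstar i]; exact div_nonneg (hΛ i).le (hμ i).le
  -- entrywise formula for NGM
  have hentry : ∀ i k, NGM Sstar ν μ γ δ B M P i k =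
      ∑ j, Sstar i * M i j * B j * ((Mᵀ *ᵥ Sstar) j)⁻¹ * P k j * ν k * (D k)⁻¹ := by
    intro i k
    show (Matrix.diagonal Sstar * M * Matrix.diagonal B *
      Matrix.diagonal (fun j => ((Mᵀ *ᵥ Sstar) j)⁻¹) * Pᵀ *
      Matrix.diagonal ν * Matrix.diagonal (fun i => ((μ i + ν i) * (μ i + γ i + δ i))⁻¹)) i k = _
    rw [Matrix.mul_diagonal, Matrix.mul_diagonal, Matrix.mul_apply]
    simp only [Matrix.mul_diagonal, Matrix.diagonal_mul, Matrix.transpose_apply]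
    rw [Finset.sum_mul, Finset.sum_mul]
  -- nonnegativity of entries
  have hGnn : ∀ i k, 0 ≤ NGM Sstar ν μ γ δ B M P i k := by
    intro i k
    rw [hentry]
    refine Finset.sum_nonneg fun j _ => ?_
    have h1 := (hMS j).le
    have h2 := (hDpos k).le
    have hi1 : 0 ≤ ((Mᵀ *ᵥ Sstar) j)⁻¹ := inv_nonneg.mpr h1
    have hi2 : 0 ≤ (D k)⁻¹ := inv_nonneg.mpr h2
    exact mul_nonneg (mul_nonneg (mul_nonneg (mul_nonneg (mul_nonneg
      (mul_nonneg (hSnn i) (hM i j)) (hB j)) hi1) (hP k j)) (hν k).le) hi2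
  -- column sums equal R0
  have hcolsum : ∀ k, ∑ i, NGM Sstar ν μ γ δ B M P i k = R0 k := by
    intro k
    simp only [hentry]
    rw [Finset.sum_comm]
    have hterm : ∀ j, ∑ i, Sstar i * M i j * B j * ((Mᵀ *ᵥ Sstar) j)⁻¹ * P k j * ν k * (D k)⁻¹
        = B j * P k j * ν k * (D k)⁻¹ := by
      intro j
      have hsum : ∑ i, Sstar i * M i j = (Mᵀ *ᵥ Sstar) j := by
        simp [Matrix.mulVec, dotProduct, Matrix.transpose_apply, mul_comm]
      calc ∑ i, Sstar i * M i j * B j * ((Mᵀ *ᵥ Sstar) j)⁻¹ * P k j * ν k * (D k)⁻¹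
          = (∑ i, Sstar i * M i j) * (B j * ((Mᵀ *ᵥ Sstar) j)⁻¹ * P k j * ν k * (D k)⁻¹) := by
            rw [Finset.sum_mul]
            exact Finset.sum_congr rfl fun x _ => by ring
        _ = (Mᵀ *ᵥ Sstar) j * ((Mᵀ *ᵥ Sstar) j)⁻¹ * (B j * P k j * ν k * (D k)⁻¹) := by
            rw [hsum]; ring
        _ = B j * P k j * ν k * (D k)⁻¹ := by
            rw [mul_inv_cancel₀ (hMS j).ne', one_mul]
    rw [Finset.sum_congr rfl fun j _ => hterm j]
    show _ = ν k / D k * ∑ j : Fin v, B j * P k j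
    rw [Finset.mul_sum]
    exact Finset.sum_congr rfl fun j _ => by rw [div_eq_mul_inv]; ring
  constructor
  · -- main bound
    have hinf_nn : 0 ≤ ⨅ i, R0 i := le_ciInf hR0nn
    have hinf_le : ∀ k, (⨅ i, R0 i) ≤ ∑ i, NGM Sstar ν μ γ δ B M P i k := by
      intro k
      rw [hcolsum k]
      exact ciInf_le (Finite.bddBelow_range _) k
    exact le_specRad_of_colsum_aux _ hGnn _ hinf_nn hinf_le
  · intro i j
    have h1 : ν i * B j * P i j / ((μ i + ν i) * (μ i + γ i + δ i))
        = ν i / ((μ i + ν i) * (μ i + γ i + δ i)) * (B j * P i j) := by ring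
    rw [h1]
    refine mul_le_mul_of_nonneg_left ?_ (div_nonneg (hν i).le (hDpos i).le)
    exact Finset.single_le_sum (f := fun k => B k * P i k)
      (fun k _ => mul_nonneg (hB k) (hP i k)) (Finset.mem_univ j)
end

section
/- Suppose the susceptible residence-time matrix has rank one in the form M = ξ·mᵀ, where ξ ∈ ℝ^u has positive entries and m ∈ ℝ^v has positive entries. Then the basic reproduction number is given explicitly by ρ(G(M,P,B)) = (ξᵀS*)⁻¹ · ⟨B, Pᵀ·diag(ν)·diag((μ+ν)∘(μ+γ+δ))⁻¹·diag(S*)·ξ⟩, where ⟨·,·⟩ is the Euclidean inner product on ℝ^v. -/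
open Matrix

lemma vmv_mul {n : Type*} [Fintype n] [DecidableEq n] (a r : n → ℂ) :
    vecMulVec a r * vecMulVec a r = (r ⬝ᵥ a) • vecMulVec a r := by
  ext i k
  simp only [mul_apply, vecMulVec_apply, Matrix.smul_apply, dotProduct, Finset.sum_mul, smul_eq_mul]
  exact Finset.sum_congr rfl fun j _ => by ring

lemma vmv_mulVec {n : Type*} [Fintype n] [DecidableEq n] (a r x : n → ℂ) :
    vecMulVec a r *ᵥ x = (r ⬝ᵥ x) • a := by
  ext i
  simp only [mulVec, vecMulVec_apply, dotProduct, Pi.smul_apply, smul_eq_mul,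
    Finset.mul_sum, Finset.sum_mul]
  exact Finset.sum_congr rfl fun j _ => by ring

lemma spec_subset {n : Type*} [Fintype n] [DecidableEq n] (a r : n → ℂ) :
    spectrum ℂ (vecMulVec a r) ⊆ {r ⬝ᵥ a, 0} := by
  intro lam hlam
  by_contra h
  simp only [Set.mem_insert_iff, Set.mem_singleton_iff, not_or] at h
  obtain ⟨ht, h0⟩ := h
  rw [spectrum.mem_iff] at hlam
  apply hlam
  set A := vecMulVec a r with hA
  set t := r ⬝ᵥ a with htdef
  set c : ℂ := (lam * (lam - t))⁻¹ with hc
  have hA2 : A * A = t • A := vmv_mul a r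
  have key : (algebraMap ℂ (Matrix n n ℂ) lam - A) * (lam⁻¹ • 1 + c • A) = 1 := by
    simp only [Algebra.algebraMap_eq_smul_one, sub_mul, mul_add, smul_mul_assoc,
      Matrix.mul_smul, one_mul, Matrix.mul_one, hA2]
    have h2 : lam - t ≠ 0 := sub_ne_zero.mpr ht
    match_scalars
    · field_simp
    · have h3 : lam * (lam - t) ≠ 0 := mul_ne_zero h0 h2
      rw [hc]
      field_simp
      ring
  rw [isUnit_iff_exists]
  exact ⟨_, key, mul_eq_one_comm.mp key⟩

lemma mem_spec {n : Type*} [Fintype n] [DecidableEq n] (a r : n → ℂ) (ha : a ≠ 0) :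
    r ⬝ᵥ a ∈ spectrum ℂ (vecMulVec a r) := by
  rw [spectrum.mem_iff]
  intro hunit
  rw [Matrix.isUnit_iff_isUnit_det] at hunit
  have hdet : ((algebraMap ℂ (Matrix n n ℂ) (r ⬝ᵥ a)) - vecMulVec a r).det = 0 := by
    rw [← Matrix.exists_mulVec_eq_zero_iff]
    refine ⟨a, ha, ?_⟩
    rw [Matrix.sub_mulVec, vmv_mulVec, Algebra.algebraMap_eq_smul_one,
      Matrix.smul_mulVec, Matrix.one_mulVec, sub_self]
  rw [hdet] at hunit
  exact hunit.ne_zero rfl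

lemma map_vmv {n : Type*} [Fintype n] [DecidableEq n] (a r : n → ℝ) :
    (vecMulVec a r).map (fun x : ℝ => (x : ℂ)) =
      vecMulVec (fun i => (a i : ℂ)) (fun j => (r j : ℂ)) := by
  ext i j
  simp [vecMulVec_apply]

lemma specRad_vmv {n : Type*} [Fintype n] [DecidableEq n] (a r : n → ℝ)
    (ha : a ≠ 0) (ht : 0 ≤ r ⬝ᵥ a) : specRad (vecMulVec a r) = r ⬝ᵥ a := by
  rw [specRad, map_vmv]
  set ac : n → ℂ := fun i => (a i : ℂ) with hac
  set rc : n → ℂ := fun j => (r j : ℂ) with hrc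
  have hdot : rc ⬝ᵥ ac = ((r ⬝ᵥ a : ℝ) : ℂ) := by
    simp [dotProduct, hac, hrc]
  have hane : ac ≠ 0 := by
    intro hz
    apply ha
    funext i
    have := congrFun hz i
    simpa [hac] using this
  apply IsGreatest.csSup_eq
  constructor
  · refine ⟨rc ⬝ᵥ ac, mem_spec ac rc hane, ?_⟩
    rw [hdot]
    simpa using ht
  · rintro x ⟨z, hz, rfl⟩
    have := spec_subset ac rc hz
    rcases this with h | h
    · rw [h, hdot]
      simp [abs_of_nonneg ht]
    · simp only [Set.mem_singleton_iff] at h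
      rw [h]
      simpa using ht

/-- explicit formula for the basic reproduction number when the
susceptible residence-time matrix is of rank one, `M = ξ·mᵀ` with `ξ, m > 0`:
`ρ(G) = (ξᵀS*)⁻¹ ⟨B, Pᵀ·diag(ν)·diag((μ+ν)∘(μ+γ+δ))⁻¹·diag(S*)·ξ⟩`. -/
theorem stmt7 (u v : ℕ) (hu : 1 ≤ u) (hv : 1 ≤ v)
    (Λ μ ν γ δ η : Fin u → ℝ)
    (hΛ : ∀ i, 0 < Λ i) (hμ : ∀ i, 0 < μ i) (hν : ∀ i, 0 < ν i) (hγ : ∀ i, 0 < γ i)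
    (hδ : ∀ i, 0 ≤ δ i) (hη : ∀ i, 0 ≤ η i)
    (B : Fin v → ℝ) (hB : ∀ j, 0 ≤ B j)
    (M P : Matrix (Fin u) (Fin v) ℝ)
    (hM : ∀ i j, 0 ≤ M i j) (hP : ∀ i j, 0 ≤ P i j)
    (Sstar : Fin u → ℝ) (hSstar : ∀ i, Sstar i = Λ i / μ i)
    (hMS : ∀ j, 0 < (Mᵀ *ᵥ Sstar) j)
    (ξ : Fin u → ℝ) (m : Fin v → ℝ) (hξ : ∀ i, 0 < ξ i) (hm : ∀ j, 0 < m j)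
    (hMrank1 : M = Matrix.of fun i j => ξ i * m j) :
    specRad (NGM Sstar ν μ γ δ B M P) =
      (∑ i : Fin u, ξ i * Sstar i)⁻¹ *
        (B ⬝ᵥ (Pᵀ *ᵥ fun i => ν i * ((μ i + ν i) * (μ i + γ i + δ i))⁻¹ * (Sstar i * ξ i))) := by
  haveI : Nonempty (Fin u) := ⟨⟨0, hu⟩⟩
  have hS : ∀ i, 0 < Sstar i := fun i => by
    rw [hSstar i]; exact div_pos (hΛ i) (hμ i)
  set c : ℝ := ∑ i, ξ i * Sstar i with hcdef
  have hc0 : 0 < c := Finset.sum_pos (fun i _ => mul_pos (hξ i) (hS i)) Finset.univ_nonempty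
  set d : Fin u → ℝ := fun k => ((μ k + ν k) * (μ k + γ k + δ k))⁻¹ with hddef
  have hd0 : ∀ k, 0 < d k := fun k => by
    apply inv_pos.mpr
    have h1 : 0 < μ k + ν k := by linarith [hμ k, hν k]
    have h2 : 0 < μ k + γ k + δ k := by linarith [hμ k, hγ k, hδ k]
    exact mul_pos h1 h2
  set a : Fin u → ℝ := fun i => Sstar i * ξ i with hadef
  set rr : Fin u → ℝ := fun k => c⁻¹ * (ν k * d k * ∑ j, P k j * B j) with hrdef
  have hMS' : ∀ j, (Mᵀ *ᵥ Sstar) j = m j * c := by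
    intro j
    simp only [mulVec, dotProduct, transpose_apply, hMrank1, of_apply, hcdef, Finset.mul_sum]
    exact Finset.sum_congr rfl fun i _ => by ring
  rw [hMrank1] at hMS'
  have key : NGM Sstar ν μ γ δ B M P = vecMulVec a rr := by
    ext i k
    rw [NGM, vecMulVec_apply, Matrix.mul_diagonal, Matrix.mul_diagonal, Matrix.mul_apply]
    simp only [Matrix.mul_diagonal, Matrix.diagonal_mul, transpose_apply, hMS', hMrank1,
      of_apply]
    rw [hadef, hrdef, hddef]
    simp only [Finset.sum_mul]
    rw [show (Sstar i * ξ i) * (c⁻¹ * (ν k * ((μ k + ν k) * (μ k + γ k + δ k))⁻¹ *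
        ∑ j, P k j * B j)) = ∑ j, Sstar i * ξ i * c⁻¹ * (ν k *
        ((μ k + ν k) * (μ k + γ k + δ k))⁻¹ * (P k j * B j)) by
      simp only [Finset.mul_sum]
      exact Finset.sum_congr rfl fun j _ => by ring]
    refine Finset.sum_congr rfl fun j _ => ?_
    have hmj : m j ≠ 0 := (hm j).ne'
    have hcne : c ≠ 0 := hc0.ne'
    have hD : (μ k + ν k) * (μ k + γ k + δ k) ≠ 0 := by
      have h1 : 0 < μ k + ν k := by linarith [hμ k, hν k]
      have h2 : 0 < μ k + γ k + δ k := by linarith [hμ k, hγ k, hδ k]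
      exact (mul_pos h1 h2).ne'
    field_simp
  rw [key, specRad_vmv]
  · rw [hrdef, hadef]
    simp only [dotProduct, mulVec, transpose_apply, hddef, Finset.mul_sum, Finset.sum_mul]
    rw [Finset.sum_comm]
    exact Finset.sum_congr rfl fun k _ => Finset.sum_congr rfl fun j _ => by ring
  · intro hz
    have := congrFun hz ⟨0, hu⟩
    simp only [hadef, Pi.zero_apply] at this
    exact (mul_pos (hS ⟨0, hu⟩) (hξ ⟨0, hu⟩)).ne' this
  · apply Finset.sum_nonneg
    intro k _
    apply mul_nonneg
    · rw [hrdef]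
      apply mul_nonneg (inv_nonneg.mpr hc0.le)
      apply mul_nonneg (mul_nonneg (hν k).le (hd0 k).le)
      exact Finset.sum_nonneg fun j _ => mul_nonneg (hP k j) (hB j)
    · exact mul_nonneg (hS k).le (hξ k).le
end

section
/- Suppose M = 𝟙·mᵀ where 𝟙 ∈ ℝ^u is the all-ones vector and m ∈ ℝ^v has positive entries summing to 1 (so M is rank one and row-stochastic). Then ρ(G(M,P,B)) = (Σ_{i=1}^u S*_i)⁻¹ · ⟨B, Pᵀ·diag(ν)·diag((μ+ν)∘(μ+γ+δ))⁻¹·S*⟩; in particular the basic reproduction number does not depend on m. -/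
open Matrix

/-- The spectral radius of a rank-one matrix `x yᵀ` with `x ≠ 0` and `⟨x,y⟩ ≥ 0`
is `⟨x,y⟩`. -/
lemma specRad_vecMulVec {n : ℕ} (x y : Fin n → ℝ) (hx : x ≠ 0) (hc : 0 ≤ x ⬝ᵥ y) :
    specRad (vecMulVec x y) = x ⬝ᵥ y := by
  set c : ℝ := x ⬝ᵥ y with hcdef
  set xc : Fin n → ℂ := fun i => (x i : ℂ)
  set yc : Fin n → ℂ := fun i => (y i : ℂ)
  have hmap : (vecMulVec x y).map (fun t : ℝ => (t : ℂ)) = vecMulVec xc yc := by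
    ext i j; simp [vecMulVec, xc, yc]
  set Ac : Matrix (Fin n) (Fin n) ℂ := vecMulVec xc yc with hAc
  have hcc : xc ⬝ᵥ yc = (c : ℂ) := by
    simp [dotProduct, xc, yc, hcdef, ← Complex.ofReal_mul]
  have hxc : xc ≠ 0 := by
    intro h
    apply hx
    funext i
    have := congrFun h i
    simpa [xc] using this
  -- Ac * Ac = c • Ac
  have hAsq : Ac * Ac = (c : ℂ) • Ac := by
    ext i j
    simp only [hAc, Matrix.mul_apply, vecMulVec_apply, Matrix.smul_apply, smul_eq_mul]
    rw [← hcc]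
    simp [dotProduct, Finset.mul_sum, Finset.sum_mul]
    ring_nf
    congr 1; funext k; ring
  -- eigenvector: Ac *ᵥ xc = c • xc
  have hev : Ac *ᵥ xc = (c : ℂ) • xc := by
    funext i
    simp only [hAc, mulVec, dotProduct, vecMulVec_apply, Pi.smul_apply, smul_eq_mul]
    rw [← hcc]
    simp only [dotProduct, Finset.sum_mul]
    exact Finset.sum_congr rfl (fun k _ => by ring)
  -- c ∈ spectrum
  have hmem : (c : ℂ) ∈ spectrum ℂ Ac := by
    rw [spectrum.mem_iff]
    rw [Matrix.isUnit_iff_isUnit_det]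
    rw [show ((algebraMap ℂ (Matrix (Fin n) (Fin n) ℂ)) (c:ℂ) - Ac).det = 0 from ?_]
    · exact fun h => by simp at h
    · rw [← Matrix.exists_mulVec_eq_zero_iff]
      refine ⟨xc, hxc, ?_⟩
      rw [Algebra.algebraMap_eq_smul_one, Matrix.sub_mulVec, Matrix.smul_mulVec,
        Matrix.one_mulVec, hev]
      simp
  -- spectrum ⊆ {0, c}
  have hsub : spectrum ℂ Ac ⊆ {0, (c : ℂ)} := by
    intro lam hlam
    by_contra hne
    simp only [Set.mem_insert_iff, Set.mem_singleton_iff, not_or] at hne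
    obtain ⟨h0, hcne⟩ := hne
    rw [spectrum.mem_iff] at hlam
    apply hlam
    have key : ((algebraMap ℂ (Matrix (Fin n) (Fin n) ℂ)) lam - Ac) *
        (lam⁻¹ • 1 + (lam⁻¹ * (lam - (c:ℂ))⁻¹) • Ac) = 1 := by
      rw [Algebra.algebraMap_eq_smul_one]
      rw [mul_add, sub_mul, sub_mul]
      simp only [smul_mul_assoc, mul_smul_comm, one_mul, mul_one, hAsq, smul_smul]
      have hb : lam⁻¹ * (lam - (c:ℂ))⁻¹ * lam = lam⁻¹ * (lam - (c:ℂ))⁻¹ * (c:ℂ) + lam⁻¹ := by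
        have hlc : lam - (c:ℂ) ≠ 0 := sub_ne_zero.mpr hcne
        field_simp
        ring
      rw [inv_mul_cancel₀ h0, one_smul, hb, add_smul]
      abel
    have := invertibleOfRightInverse _ _ key
    exact isUnit_of_invertible _
  -- compute sSup
  rw [specRad, hmap]
  have hcS : c ∈ (fun z : ℂ => ‖z‖) '' spectrum ℂ Ac := by
    refine ⟨(c:ℂ), hmem, ?_⟩
    simpa [Complex.norm_real] using abs_of_nonneg hc
  have hbound : ∀ a ∈ (fun z : ℂ => ‖z‖) '' spectrum ℂ Ac, a ≤ c := by
    rintro a ⟨z, hz, rfl⟩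
    rcases hsub hz with h | h
    · simp [h]; exact hc
    · simp only [Set.mem_singleton_iff] at h
      rw [h]
      simp [Complex.norm_real, abs_of_nonneg hc]
  exact le_antisymm (csSup_le ⟨c, hcS⟩ hbound) (le_csSup ⟨c, hbound⟩ hcS)

/-- if `M = 𝟙·mᵀ` is rank one and row-stochastic, then
`ρ(G) = (Σ_i S*_i)⁻¹ ⟨B, Pᵀ·diag(ν)·diag((μ+ν)∘(μ+γ+δ))⁻¹·S*⟩`; in particular
the basic reproduction number does not depend on `m`. -/
theorem stmt8 (u v : ℕ) (hu : 1 ≤ u) (hv : 1 ≤ v)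
    (Λ μ ν γ δ η : Fin u → ℝ)
    (hΛ : ∀ i, 0 < Λ i) (hμ : ∀ i, 0 < μ i) (hν : ∀ i, 0 < ν i) (hγ : ∀ i, 0 < γ i)
    (hδ : ∀ i, 0 ≤ δ i) (hη : ∀ i, 0 ≤ η i)
    (B : Fin v → ℝ) (hB : ∀ j, 0 ≤ B j)
    (M P : Matrix (Fin u) (Fin v) ℝ)
    (hM : ∀ i j, 0 ≤ M i j) (hP : ∀ i j, 0 ≤ P i j)
    (Sstar : Fin u → ℝ) (hSstar : ∀ i, Sstar i = Λ i / μ i)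
    (hMS : ∀ j, 0 < (Mᵀ *ᵥ Sstar) j)
    (m : Fin v → ℝ) (hm : ∀ j, 0 < m j) (hmsum : ∑ j : Fin v, m j = 1)
    (hMrank1 : M = Matrix.of fun _ j => m j) :
    specRad (NGM Sstar ν μ γ δ B M P) =
      (∑ i : Fin u, Sstar i)⁻¹ *
        (B ⬝ᵥ (Pᵀ *ᵥ fun i => ν i * ((μ i + ν i) * (μ i + γ i + δ i))⁻¹ * Sstar i)) := by
  have hS : ∀ i, 0 < Sstar i := fun i => by
    rw [hSstar i]; exact div_pos (hΛ i) (hμ i)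
  set y : Fin u → ℝ := fun k =>
    ν k * ((μ k + ν k) * (μ k + γ k + δ k))⁻¹ *
      ∑ j, m j * B j * ((Mᵀ *ᵥ Sstar) j)⁻¹ * P k j with hy
  have hNGM : NGM Sstar ν μ γ δ B M P = vecMulVec Sstar y := by
    ext i k
    simp [NGM, Matrix.mul_apply, Matrix.diagonal, Matrix.transpose_apply, vecMulVec_apply,
      Finset.sum_mul, Finset.mul_sum, hMrank1, hy]
    exact Finset.sum_congr rfl (fun j _ => by ring)
  have hden : ∀ k, 0 < ((μ k + ν k) * (μ k + γ k + δ k))⁻¹ := fun k =>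
    inv_pos.mpr (mul_pos (by linarith [hμ k, hν k]) (by linarith [hμ k, hγ k, hδ k]))
  have hynn : ∀ k, 0 ≤ y k := by
    intro k
    apply mul_nonneg (mul_nonneg (hν k).le (hden k).le)
    apply Finset.sum_nonneg
    intro j _
    exact mul_nonneg (mul_nonneg (mul_nonneg (hm j).le (hB j)) (inv_nonneg.mpr (hMS j).le))
      (hP k j)
  have hc : 0 ≤ Sstar ⬝ᵥ y :=
    Finset.sum_nonneg fun k _ => mul_nonneg (hS k).le (hynn k)
  have hxne : Sstar ≠ 0 := by
    intro h
    exact absurd (congrFun h ⟨0, hu⟩) (ne_of_gt (hS ⟨0, hu⟩))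
  rw [hNGM, specRad_vecMulVec Sstar y hxne hc]
  -- now the scalar computation
  set T : ℝ := ∑ i, Sstar i with hT
  have hTpos : 0 < T := Finset.sum_pos (fun i _ => hS i) ⟨⟨0, hu⟩, Finset.mem_univ _⟩
  have hMS' : ∀ j, (Mᵀ *ᵥ Sstar) j = T * m j := by
    intro j
    simp only [mulVec, dotProduct, hMrank1, transpose_apply, of_apply, hT]
    rw [← Finset.mul_sum, mul_comm]
  have hkey : ∀ j, m j * ((Mᵀ *ᵥ Sstar) j)⁻¹ = T⁻¹ := by
    intro j
    rw [hMS' j, mul_inv]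
    rw [mul_comm, mul_assoc, inv_mul_cancel₀ (hm j).ne', mul_one]
  calc Sstar ⬝ᵥ y
      = ∑ k, ∑ j, Sstar k * (ν k * ((μ k + ν k) * (μ k + γ k + δ k))⁻¹) *
          (m j * ((Mᵀ *ᵥ Sstar) j)⁻¹ * (B j * P k j)) := by
        refine Finset.sum_congr rfl fun k _ => ?_
        simp only [hy, Finset.mul_sum]
        exact Finset.sum_congr rfl fun j _ => by ring
    _ = ∑ k, ∑ j, T⁻¹ * (B j * (P k j * (ν k * ((μ k + ν k) * (μ k + γ k + δ k))⁻¹ * Sstar k))) := by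
        refine Finset.sum_congr rfl fun k _ => Finset.sum_congr rfl fun j _ => ?_
        rw [show Sstar k * (ν k * ((μ k + ν k) * (μ k + γ k + δ k))⁻¹) *
            (m j * ((Mᵀ *ᵥ Sstar) j)⁻¹ * (B j * P k j)) =
          (m j * ((Mᵀ *ᵥ Sstar) j)⁻¹) *
            (B j * (P k j * (ν k * ((μ k + ν k) * (μ k + γ k + δ k))⁻¹ * Sstar k))) from by ring,
          hkey j]
    _ = T⁻¹ * (B ⬝ᵥ (Pᵀ *ᵥ fun i => ν i * ((μ i + ν i) * (μ i + γ i + δ i))⁻¹ * Sstar i)) := by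
        rw [Finset.sum_comm]
        simp only [dotProduct, mulVec, transpose_apply, Finset.mul_sum]
end

section
/- Suppose the infected residence-time matrix has rank one in the form P = α·pᵀ, where α ∈ ℝ^u and p ∈ ℝ^v have nonnegative entries. Then the basic reproduction number is given explicitly by ρ(G(M,P,B)) = ⟨S*∘α, diag(ν)·diag((μ+ν)∘(μ+γ+δ))⁻¹·M·diag(MᵀS*)⁻¹·(B∘p)⟩, where ⟨·,·⟩ is the Euclidean inner product on ℝ^u and ∘ the componentwise product. -/
open Matrix

private lemma vecMulVec_mulVec' {n : ℕ} (w z x : Fin n → ℂ) :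
    vecMulVec w z *ᵥ x = (z ⬝ᵥ x) • w := by
  funext i
  simp only [vecMulVec_apply, mulVec, dotProduct, Pi.smul_apply, smul_eq_mul, Finset.sum_mul]
  exact Finset.sum_congr rfl fun j _ => by ring

private lemma eig_mem_spectrum' {n : ℕ} (A : Matrix (Fin n) (Fin n) ℂ) (lam : ℂ)
    (x : Fin n → ℂ) (hx : x ≠ 0) (h : A *ᵥ x = lam • x) : lam ∈ spectrum ℂ A := by
  rw [spectrum.mem_iff, Matrix.isUnit_iff_isUnit_det, isUnit_iff_ne_zero, not_not,
    ← Matrix.exists_mulVec_eq_zero_iff]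
  refine ⟨x, hx, ?_⟩
  simp [sub_mulVec, h]
  funext i
  simp [mulVec, dotProduct, diagonal, Matrix.algebraMap_eq_diagonal]

private lemma spectrum_exists_eig' {n : ℕ} (A : Matrix (Fin n) (Fin n) ℂ) (lam : ℂ)
    (h : lam ∈ spectrum ℂ A) : ∃ x ≠ 0, A *ᵥ x = lam • x := by
  rw [spectrum.mem_iff, Matrix.isUnit_iff_isUnit_det, isUnit_iff_ne_zero, not_not,
    ← Matrix.exists_mulVec_eq_zero_iff] at h
  obtain ⟨x, hx, hx2⟩ := h
  refine ⟨x, hx, ?_⟩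
  rw [sub_mulVec] at hx2
  have heq : (algebraMap ℂ (Matrix (Fin n) (Fin n) ℂ)) lam *ᵥ x = lam • x := by
    funext i
    simp [Matrix.algebraMap_eq_diagonal, mulVec, dotProduct, diagonal]
  rw [heq] at hx2
  exact (sub_eq_zero.mp hx2).symm

/-- explicit formula for the basic reproduction number when the
infected residence-time matrix is of rank one, `P = α·pᵀ` with `α, p ≥ 0`:
`ρ(G) = ⟨S*∘α, diag(ν)·diag((μ+ν)∘(μ+γ+δ))⁻¹·M·diag(MᵀS*)⁻¹·(B∘p)⟩`. -/
theorem stmt9 (u v : ℕ) (hu : 1 ≤ u) (hv : 1 ≤ v)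
    (Λ μ ν γ δ η : Fin u → ℝ)
    (hΛ : ∀ i, 0 < Λ i) (hμ : ∀ i, 0 < μ i) (hν : ∀ i, 0 < ν i) (hγ : ∀ i, 0 < γ i)
    (hδ : ∀ i, 0 ≤ δ i) (hη : ∀ i, 0 ≤ η i)
    (B : Fin v → ℝ) (hB : ∀ j, 0 ≤ B j)
    (M P : Matrix (Fin u) (Fin v) ℝ)
    (hM : ∀ i j, 0 ≤ M i j) (hP : ∀ i j, 0 ≤ P i j)
    (Sstar : Fin u → ℝ) (hSstar : ∀ i, Sstar i = Λ i / μ i)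
    (hMS : ∀ j, 0 < (Mᵀ *ᵥ Sstar) j)
    (α : Fin u → ℝ) (p : Fin v → ℝ) (hα : ∀ i, 0 ≤ α i) (hp : ∀ j, 0 ≤ p j)
    (hPrank1 : P = Matrix.of fun i j => α i * p j) :
    specRad (NGM Sstar ν μ γ δ B M P) =
      (fun i => Sstar i * α i) ⬝ᵥ
        (fun i => ν i * ((μ i + ν i) * (μ i + γ i + δ i))⁻¹ *
          (M *ᵥ fun j => ((Mᵀ *ᵥ Sstar) j)⁻¹ * (B j * p j)) i) := by
  -- abbreviations
  set c : Fin u → ℝ := fun i => ((μ i + ν i) * (μ i + γ i + δ i))⁻¹ with hc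
  set wR : Fin u → ℝ := fun i => Sstar i * (M *ᵥ fun j => ((Mᵀ *ᵥ Sstar) j)⁻¹ * (B j * p j)) i with hwR
  set zR : Fin u → ℝ := fun i => α i * (ν i * c i) with hzR
  -- basic positivity facts
  have hS : ∀ i, 0 < Sstar i := fun i => by rw [hSstar i]; exact div_pos (hΛ i) (hμ i)
  have hcpos : ∀ i, 0 < c i := fun i => by
    have := hμ i; have := hν i; have := hγ i; have := hδ i
    simp only [hc]; positivity
  have hwR0 : ∀ i, 0 ≤ wR i := fun i => by
    apply mul_nonneg (hS i).le
    simp only [mulVec, dotProduct]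
    apply Finset.sum_nonneg
    intro j _
    exact mul_nonneg (hM i j) (mul_nonneg (inv_nonneg.mpr (hMS j).le)
      (mul_nonneg (hB j) (hp j)))
  have hzR0 : ∀ i, 0 ≤ zR i := fun i =>
    mul_nonneg (hα i) (mul_nonneg (hν i).le (hcpos i).le)
  -- the trace / target value
  set tR : ℝ := zR ⬝ᵥ wR with htR
  have htR0 : 0 ≤ tR := Finset.sum_nonneg fun i _ => mul_nonneg (hzR0 i) (hwR0 i)
  have hRHS : (fun i => Sstar i * α i) ⬝ᵥ
      (fun i => ν i * ((μ i + ν i) * (μ i + γ i + δ i))⁻¹ *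
        (M *ᵥ fun j => ((Mᵀ *ᵥ Sstar) j)⁻¹ * (B j * p j)) i) = tR := by
    simp only [htR, dotProduct, hwR, hzR]
    exact Finset.sum_congr rfl fun i _ => by ring
  rw [hRHS]
  -- NGM is rank one
  have hNGM : NGM Sstar ν μ γ δ B M P = vecMulVec wR zR := by
    ext i k
    simp only [NGM]
    rw [Matrix.mul_diagonal, Matrix.mul_diagonal, Matrix.mul_apply]
    simp only [Matrix.mul_diagonal, Matrix.diagonal_mul, Matrix.transpose_apply, hPrank1,
      Matrix.of_apply, vecMulVec_apply, hwR, hzR, hc, mulVec, dotProduct, Finset.sum_mul, Finset.mul_sum]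
    exact Finset.sum_congr rfl fun j _ => by ring
  -- complexify
  set wC : Fin u → ℂ := fun i => (wR i : ℂ) with hwC
  set zC : Fin u → ℂ := fun i => (zR i : ℂ) with hzC
  have hmap : (vecMulVec wR zR).map (fun x : ℝ => (x : ℂ)) = vecMulVec wC zC := by
    ext i k
    simp [vecMulVec_apply, hwC, hzC]
  have htC : zC ⬝ᵥ wC = (tR : ℂ) := by
    simp [dotProduct, htR, hwC, hzC]
  set A : Matrix (Fin u) (Fin u) ℂ := vecMulVec wC zC with hA
  -- spectrum is contained in {0, tR}
  have hsub : ∀ lam ∈ spectrum ℂ A, lam = 0 ∨ lam = (tR : ℂ) := by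
    intro lam hlam
    obtain ⟨x, hx, hx2⟩ := spectrum_exists_eig' A lam hlam
    rw [hA, vecMulVec_mulVec'] at hx2
    by_cases hzx : zC ⬝ᵥ x = 0
    · left
      rw [hzx, zero_smul] at hx2
      rcases smul_eq_zero.mp hx2.symm with h | h
      · exact h
      · exact absurd h hx
    · right
      have h2 := congrArg (fun y => zC ⬝ᵥ y) hx2
      simp only [dotProduct_smul, smul_eq_mul, htC] at h2
      exact mul_left_cancel₀ hzx (by linear_combination -h2)
  -- tR is in the spectrum
  have hmem : (tR : ℂ) ∈ spectrum ℂ A := by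
    by_cases hw : wC = 0
    · have ht0 : (tR : ℂ) = 0 := by rw [← htC, hw]; simp
      have i0 : Fin u := ⟨0, hu⟩
      have hx0 : (Pi.single i0 1 : Fin u → ℂ) ≠ 0 := by
        intro h
        have h1 := congrFun h i0
        simp at h1
      refine eig_mem_spectrum' A _ (Pi.single i0 1) hx0 ?_
      rw [hA, vecMulVec_mulVec', hw, ht0]
      simp
    · exact eig_mem_spectrum' A _ wC hw (by rw [hA, vecMulVec_mulVec', htC])
  -- compute the sSup
  have habs_mem : tR ∈ (fun z : ℂ => ‖z‖) '' spectrum ℂ A :=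
    ⟨(tR : ℂ), hmem, by simp [abs_of_nonneg htR0]⟩
  have hub : ∀ y ∈ (fun z : ℂ => ‖z‖) '' spectrum ℂ A, y ≤ tR := by
    rintro y ⟨lam, hlam, rfl⟩
    rcases hsub lam hlam with rfl | rfl
    · simpa using htR0
    · simp [abs_of_nonneg htR0]
  rw [specRad, hNGM, hmap]
  exact le_antisymm (csSup_le ⟨tR, habs_mem⟩ hub) (le_csSup ⟨tR, hub⟩ habs_mem)
end

section
/- Suppose P = 𝟙·pᵀ where 𝟙 ∈ ℝ^u is the all-ones vector and p ∈ ℝ^v has nonnegative entries summing to 1 (so P is rank one and row-stochastic). Then ρ(G(M,P,B)) = ⟨S*, diag(ν)·diag((μ+ν)∘(μ+γ+δ))⁻¹·M·diag(MᵀS*)⁻¹·(B∘p)⟩. -/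
open Matrix

lemma rankOne_det {n : ℕ} (x y : Fin n → ℂ) (μ : ℂ) (hμ : μ ≠ 0) :
    det (μ • (1 : Matrix (Fin n) (Fin n) ℂ) - Matrix.replicateCol Unit x * Matrix.replicateRow Unit y)
      = μ ^ n * (1 - μ⁻¹ * ∑ i, x i * y i) := by
  have h : μ • (1 : Matrix (Fin n) (Fin n) ℂ) - Matrix.replicateCol Unit x * Matrix.replicateRow Unit y
      = μ • ((1 : Matrix (Fin n) (Fin n) ℂ) - Matrix.replicateCol Unit (μ⁻¹ • x) * Matrix.replicateRow Unit y) := by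
    rw [smul_sub]
    congr 1
    ext i k
    simp [Matrix.mul_apply, smul_eq_mul]
    field_simp
  rw [h, det_smul, Fintype.card_fin]
  congr 1
  rw [det_one_sub_mul_comm, det_unique]
  simp only [Matrix.sub_apply, Matrix.one_apply_eq, Matrix.replicateRow_mul_replicateCol_apply, dotProduct,
    Pi.smul_apply, smul_eq_mul, Finset.mul_sum]
  congr 1
  exact Finset.sum_congr rfl fun i _ => by ring

lemma rankOne_mem_spectrum_iff {n : ℕ} (x y : Fin n → ℂ) (μ : ℂ) :
    μ ∈ spectrum ℂ (Matrix.replicateCol Unit x * Matrix.replicateRow Unit y) ↔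
      det (μ • (1 : Matrix (Fin n) (Fin n) ℂ) - Matrix.replicateCol Unit x * Matrix.replicateRow Unit y) = 0 := by
  rw [spectrum.mem_iff, Algebra.algebraMap_eq_smul_one, Matrix.isUnit_iff_isUnit_det,
    isUnit_iff_ne_zero, not_ne_iff]

lemma rankOne_det_zero {n : ℕ} (hn : 2 ≤ n) (x y : Fin n → ℂ) :
    det (Matrix.replicateCol Unit x * Matrix.replicateRow Unit y) = 0 := by
  have hfac : Matrix.replicateCol Unit x * Matrix.replicateRow Unit y
      = Matrix.diagonal x * Matrix.of (fun _ k : Fin n => y k) := by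
    ext i k
    simp [Matrix.mul_apply, Matrix.diagonal_apply, ite_mul, Finset.sum_ite_eq]
  have h01 : (⟨0, by omega⟩ : Fin n) ≠ (⟨1, by omega⟩ : Fin n) := by
    simp [Fin.ext_iff]
  rw [hfac, det_mul, Matrix.det_zero_of_row_eq (M := Matrix.of fun _ k : Fin n => y k) h01 rfl,
    mul_zero]

lemma specRad_rankOne {n : ℕ} (hn : 1 ≤ n) (x y : Fin n → ℝ) (ht : 0 ≤ ∑ i, x i * y i) :
    specRad (Matrix.of fun i k => x i * y k) = ∑ i, x i * y i := by
  set t : ℝ := ∑ i, x i * y i with htdef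
  set xC : Fin n → ℂ := fun i => (x i : ℂ) with hxC
  set yC : Fin n → ℂ := fun i => (y i : ℂ) with hyC
  have htC : ∑ i, xC i * yC i = (t : ℂ) := by
    rw [htdef]; push_cast; rfl
  have hmap : (Matrix.of fun i k => x i * y k).map (fun r : ℝ => (r : ℂ))
      = Matrix.replicateCol Unit xC * Matrix.replicateRow Unit yC := by
    ext i k; simp [Matrix.mul_apply, hxC, hyC]
  rw [specRad, hmap]
  have hspec : ∀ μ : ℂ, μ ∈ spectrum ℂ (Matrix.replicateCol Unit xC * Matrix.replicateRow Unit yC) →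
      μ = 0 ∨ μ = (t : ℂ) := by
    intro μ hμ
    by_cases h0 : μ = 0
    · exact Or.inl h0
    · right
      rw [rankOne_mem_spectrum_iff, rankOne_det xC yC μ h0, htC] at hμ
      rcases mul_eq_zero.mp hμ with h | h
      · exact absurd (pow_eq_zero_iff (by omega)|>.mp h) h0
      · have : μ⁻¹ * t = 1 := by linear_combination -h
        field_simp at this
        exact this.symm
  have hmem : (t : ℂ) ∈ spectrum ℂ (Matrix.replicateCol Unit xC * Matrix.replicateRow Unit yC) := by
    by_cases ht0 : (t : ℂ) = 0
    · rw [rankOne_mem_spectrum_iff] at *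
      rw [ht0, zero_smul, zero_sub, det_neg]
      rcases eq_or_lt_of_le hn with h1 | h2
      · have hne : n = 1 := h1.symm
        subst hne
        rw [det_unique]
        have hxy : xC default * yC default = 0 := by
          have h := htC
          rw [ht0] at h
          simpa using h
        simp [Matrix.mul_apply]
        exact mul_eq_zero.mp hxy
      · rw [rankOne_det_zero (by omega) xC yC, mul_zero]
    · rw [rankOne_mem_spectrum_iff, rankOne_det xC yC _ ht0, htC]
      field_simp
      simp
  have hgreat : IsGreatest ((fun z : ℂ => ‖z‖) '' spectrum ℂ (Matrix.replicateCol Unit xC * Matrix.replicateRow Unit yC)) t := by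
    constructor
    · exact ⟨(t : ℂ), hmem, by simp [Complex.norm_real, abs_of_nonneg ht]⟩
    · rintro r ⟨μ, hμ, rfl⟩
      rcases hspec μ hμ with rfl | rfl
      · simpa using ht
      · simp [Complex.norm_real, abs_of_nonneg ht]
  exact hgreat.csSup_eq

/-- if `P = 𝟙·pᵀ` is rank one and row-stochastic, then
`ρ(G) = ⟨S*, diag(ν)·diag((μ+ν)∘(μ+γ+δ))⁻¹·M·diag(MᵀS*)⁻¹·(B∘p)⟩`. -/
theorem stmt10 (u v : ℕ) (hu : 1 ≤ u) (hv : 1 ≤ v)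
    (Λ μ ν γ δ η : Fin u → ℝ)
    (hΛ : ∀ i, 0 < Λ i) (hμ : ∀ i, 0 < μ i) (hν : ∀ i, 0 < ν i) (hγ : ∀ i, 0 < γ i)
    (hδ : ∀ i, 0 ≤ δ i) (hη : ∀ i, 0 ≤ η i)
    (B : Fin v → ℝ) (hB : ∀ j, 0 ≤ B j)
    (M P : Matrix (Fin u) (Fin v) ℝ)
    (hM : ∀ i j, 0 ≤ M i j) (hP : ∀ i j, 0 ≤ P i j)
    (Sstar : Fin u → ℝ) (hSstar : ∀ i, Sstar i = Λ i / μ i)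
    (hMS : ∀ j, 0 < (Mᵀ *ᵥ Sstar) j)
    (p : Fin v → ℝ) (hp : ∀ j, 0 ≤ p j) (hpsum : ∑ j : Fin v, p j = 1)
    (hPrank1 : P = Matrix.of fun _ j => p j) :
    specRad (NGM Sstar ν μ γ δ B M P) =
      Sstar ⬝ᵥ
        (fun i => ν i * ((μ i + ν i) * (μ i + γ i + δ i))⁻¹ *
          (M *ᵥ fun j => ((Mᵀ *ᵥ Sstar) j)⁻¹ * (B j * p j)) i) := by
  set X : Fin u → ℝ :=
    fun i => Sstar i * ∑ j, M i j * (B j * (((Mᵀ *ᵥ Sstar) j)⁻¹ * p j)) with hX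
  set Y : Fin u → ℝ :=
    fun k => ν k * ((μ k + ν k) * (μ k + γ k + δ k))⁻¹ with hY
  have hNGM : NGM Sstar ν μ γ δ B M P = Matrix.of fun i k => X i * Y k := by
    ext i k
    simp only [NGM, hPrank1, Matrix.mul_apply, Matrix.diagonal_apply, Matrix.transpose_apply,
      Matrix.of_apply, ite_mul, mul_ite, zero_mul, mul_zero, Finset.sum_ite_eq,
      Finset.sum_ite_eq', Finset.mem_univ, if_true, hX, hY]
    simp only [Finset.mul_sum, Finset.sum_mul]
    exact Finset.sum_congr rfl fun j _ => by ring
  have hXnn : ∀ i, 0 ≤ X i := by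
    intro i
    apply mul_nonneg
    · rw [hSstar i]; exact div_nonneg (hΛ i).le (hμ i).le
    · exact Finset.sum_nonneg fun j _ => mul_nonneg (hM i j)
        (mul_nonneg (hB j) (mul_nonneg (inv_nonneg.mpr (hMS j).le) (hp j)))
  have hYnn : ∀ i, 0 ≤ Y i := by
    intro i
    apply mul_nonneg (hν i).le
    apply inv_nonneg.mpr
    apply mul_nonneg (by linarith [hμ i, hν i]) (by linarith [hμ i, hγ i, hδ i])
  rw [hNGM, specRad_rankOne hu X Y
    (Finset.sum_nonneg fun i _ => mul_nonneg (hXnn i) (hYnn i))]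
  show _ = ∑ i, Sstar i * _
  refine Finset.sum_congr rfl fun i _ => ?_
  simp only [hX, hY, Matrix.mulVec, dotProduct]
  simp only [Finset.mul_sum, Finset.sum_mul]
  refine Finset.sum_congr rfl fun j _ => by ring
end

section
/- Extend the patch system by one zero-risk patch: let B̃ ∈ ℝ^{v+1} have B̃_j = B_j for j ≤ v and B̃_{v+1} = 0, and let M̃, P̃ ∈ ℝ^{u×(v+1)} be obtained from M, P by appending arbitrary nonnegative columns m', p', assuming (M̃ᵀS*)_j > 0 for every j ≤ v+1. Then the basic reproduction number is unchanged: ρ(G(M̃,P̃,B̃)) = ρ(G(M,P,B)). -/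
open Matrix

/-- appending one zero-risk patch (with arbitrary nonnegative extra
columns of residence times) leaves the basic reproduction number unchanged. -/
theorem stmt12 (u v : ℕ) (hu : 1 ≤ u) (hv : 1 ≤ v)
    (Λ μ ν γ δ η : Fin u → ℝ)
    (hΛ : ∀ i, 0 < Λ i) (hμ : ∀ i, 0 < μ i) (hν : ∀ i, 0 < ν i) (hγ : ∀ i, 0 < γ i)
    (hδ : ∀ i, 0 ≤ δ i) (hη : ∀ i, 0 ≤ η i)
    (B : Fin v → ℝ) (hB : ∀ j, 0 ≤ B j)
    (M P : Matrix (Fin u) (Fin v) ℝ)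
    (hM : ∀ i j, 0 ≤ M i j) (hP : ∀ i j, 0 ≤ P i j)
    (Sstar : Fin u → ℝ) (hSstar : ∀ i, Sstar i = Λ i / μ i)
    (hMS : ∀ j, 0 < (Mᵀ *ᵥ Sstar) j)
    (m' p' : Fin u → ℝ) (hm' : ∀ i, 0 ≤ m' i) (hp' : ∀ i, 0 ≤ p' i)
    (hMtS : ∀ j, 0 < ((Matrix.of fun i => Fin.snoc (M i) (m' i))ᵀ *ᵥ Sstar) j) :
    specRad (NGM Sstar ν μ γ δ (Fin.snoc B 0)
        (Matrix.of fun i => Fin.snoc (M i) (m' i))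
        (Matrix.of fun i => Fin.snoc (P i) (p' i))) =
      specRad (NGM Sstar ν μ γ δ B M P) := by
  have key : NGM Sstar ν μ γ δ (Fin.snoc B 0)
        (Matrix.of fun i => Fin.snoc (M i) (m' i))
        (Matrix.of fun i => Fin.snoc (P i) (p' i)) = NGM Sstar ν μ γ δ B M P := by
    unfold NGM
    congr 2
    ext i k
    rw [Matrix.mul_apply, Matrix.mul_apply]
    rw [Fin.sum_univ_castSucc]
    simp only [Matrix.mul_diagonal, Matrix.diagonal_mul, Matrix.of_apply,
      Matrix.transpose_apply, Fin.snoc_castSucc, Fin.snoc_last, Matrix.mulVec,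
      dotProduct]
    simp [Fin.snoc_castSucc]
  rw [key]
end

section
/- A tuple (S,E,I,R) ∈ (ℝ^u)^4 with all entries of I positive satisfies the equilibrium equations of the density-dependent model, namely 0 = Λ − diag(S)·M·diag(B)·Pᵀ·I − diag(μ)·S + diag(η)·R, 0 = diag(S)·M·diag(B)·Pᵀ·I − diag(ν+μ)·E, 0 = diag(ν)·E − diag(γ+μ+δ)·I, and 0 = diag(γ)·I − diag(η+μ)·R, if and only if E has all entries positive, E is a fixed point of g (i.e., g(E) = E), and S = S* − K·E, I = L·E, R = A·E. Consequently the model has a unique endemic equilibrium if and only if g has a unique fixed point with all entries positive. -/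
open Matrix

/-- `A = diag(η+μ)⁻¹·diag(γ)·diag(γ+μ+δ)⁻¹·diag(ν)`. -/
noncomputable def Amat {u : ℕ} (μ ν γ δ η : Fin u → ℝ) : Matrix (Fin u) (Fin u) ℝ :=
  Matrix.diagonal (fun i => (η i + μ i)⁻¹) * Matrix.diagonal γ *
    Matrix.diagonal (fun i => (γ i + μ i + δ i)⁻¹) * Matrix.diagonal ν

/-- `L = diag(γ+μ+δ)⁻¹·diag(ν)`. -/
noncomputable def Lmat {u : ℕ} (μ ν γ δ : Fin u → ℝ) : Matrix (Fin u) (Fin u) ℝ :=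
  Matrix.diagonal (fun i => (γ i + μ i + δ i)⁻¹) * Matrix.diagonal ν

/-- `K = diag(μ)⁻¹·diag(ν+μ) − diag(μ)⁻¹·diag(η)·A`. -/
noncomputable def Kmat {u : ℕ} (μ ν γ δ η : Fin u → ℝ) : Matrix (Fin u) (Fin u) ℝ :=
  Matrix.diagonal (fun i => (μ i)⁻¹) * Matrix.diagonal (fun i => ν i + μ i) -
    Matrix.diagonal (fun i => (μ i)⁻¹) * Matrix.diagonal η * Amat μ ν γ δ η

/-- `g(y) = diag(ν+μ)⁻¹·diag(S* − K·y)·M·diag(B)·Pᵀ·L·y`. -/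
noncomputable def gmap {u v : ℕ} (μ ν γ δ η Sstar : Fin u → ℝ) (B : Fin v → ℝ)
    (M P : Matrix (Fin u) (Fin v) ℝ) (y : Fin u → ℝ) : Fin u → ℝ :=
  (Matrix.diagonal (fun i => (ν i + μ i)⁻¹) *
      Matrix.diagonal (Sstar - Kmat μ ν γ δ η *ᵥ y) *
      M * Matrix.diagonal B * Pᵀ * Lmat μ ν γ δ) *ᵥ y

lemma Lmat_apply {u : ℕ} (μ ν γ δ : Fin u → ℝ) (x : Fin u → ℝ) (i : Fin u) :
    (Lmat μ ν γ δ *ᵥ x) i = (γ i + μ i + δ i)⁻¹ * (ν i * x i) := by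
  simp [Lmat, ← Matrix.mulVec_mulVec, Matrix.mulVec_diagonal]
  ring

lemma Amat_apply {u : ℕ} (μ ν γ δ η : Fin u → ℝ) (x : Fin u → ℝ) (i : Fin u) :
    (Amat μ ν γ δ η *ᵥ x) i =
      (η i + μ i)⁻¹ * (γ i * ((γ i + μ i + δ i)⁻¹ * (ν i * x i))) := by
  simp [Amat, ← Matrix.mulVec_mulVec, Matrix.mulVec_diagonal]
  ring

lemma Kmat_apply {u : ℕ} (μ ν γ δ η : Fin u → ℝ) (x : Fin u → ℝ) (i : Fin u) :
    (Kmat μ ν γ δ η *ᵥ x) i =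
      (μ i)⁻¹ * ((ν i + μ i) * x i) - (μ i)⁻¹ * (η i * (Amat μ ν γ δ η *ᵥ x) i) := by
  simp [Kmat, Matrix.sub_mulVec, ← Matrix.mulVec_mulVec, Matrix.mulVec_diagonal]
  ring

lemma gmap_apply {u v : ℕ} (μ ν γ δ η Sstar : Fin u → ℝ) (B : Fin v → ℝ)
    (M P : Matrix (Fin u) (Fin v) ℝ) (y : Fin u → ℝ) (i : Fin u) :
    gmap μ ν γ δ η Sstar B M P y i =
      (ν i + μ i)⁻¹ * ((Sstar i - (Kmat μ ν γ δ η *ᵥ y) i) *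
        (M *ᵥ (Matrix.diagonal B *ᵥ (Pᵀ *ᵥ (Lmat μ ν γ δ *ᵥ y)))) i) := by
  simp [gmap, ← Matrix.mulVec_mulVec, Matrix.mulVec_diagonal]
  ring

lemma diagmul_apply {u v : ℕ} (B : Fin v → ℝ) (M P : Matrix (Fin u) (Fin v) ℝ)
    (S I : Fin u → ℝ) (i : Fin u) :
    ((Matrix.diagonal S * M * Matrix.diagonal B * Pᵀ) *ᵥ I) i =
      S i * (M *ᵥ (Matrix.diagonal B *ᵥ (Pᵀ *ᵥ I))) i := by
  simp [← Matrix.mulVec_mulVec, Matrix.mulVec_diagonal]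

/-- a tuple `(S,E,I,R)` with `I ≫ 0` is an equilibrium of the
density-dependent model iff `E ≫ 0`, `g(E) = E`, and `S = S* − K·E`, `I = L·E`,
`R = A·E`; consequently the model has a unique endemic equilibrium iff `g` has a
unique positive fixed point. -/
theorem stmt14 (u v : ℕ) (hu : 1 ≤ u) (hv : 1 ≤ v)
    (Λ μ ν γ δ η : Fin u → ℝ)
    (hΛ : ∀ i, 0 < Λ i) (hμ : ∀ i, 0 < μ i) (hν : ∀ i, 0 < ν i) (hγ : ∀ i, 0 < γ i)
    (hδ : ∀ i, 0 ≤ δ i) (hη : ∀ i, 0 ≤ η i)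
    (B : Fin v → ℝ) (hB : ∀ j, 0 ≤ B j)
    (M P : Matrix (Fin u) (Fin v) ℝ)
    (hM : ∀ i j, 0 ≤ M i j) (hP : ∀ i j, 0 ≤ P i j)
    (Sstar : Fin u → ℝ) (hSstar : ∀ i, Sstar i = Λ i / μ i) :
    (∀ S E I R : Fin u → ℝ, (∀ i, 0 < I i) →
      ((0 = Λ - (Matrix.diagonal S * M * Matrix.diagonal B * Pᵀ) *ᵥ I -
            Matrix.diagonal μ *ᵥ S + Matrix.diagonal η *ᵥ R ∧
        0 = (Matrix.diagonal S * M * Matrix.diagonal B * Pᵀ) *ᵥ I -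
            Matrix.diagonal (fun i => ν i + μ i) *ᵥ E ∧
        0 = Matrix.diagonal ν *ᵥ E - Matrix.diagonal (fun i => γ i + μ i + δ i) *ᵥ I ∧
        0 = Matrix.diagonal γ *ᵥ I - Matrix.diagonal (fun i => η i + μ i) *ᵥ R) ↔
      ((∀ i, 0 < E i) ∧ gmap μ ν γ δ η Sstar B M P E = E ∧
        S = Sstar - Kmat μ ν γ δ η *ᵥ E ∧ I = Lmat μ ν γ δ *ᵥ E ∧
        R = Amat μ ν γ δ η *ᵥ E))) ∧
    ((∃! x : (Fin u → ℝ) × (Fin u → ℝ) × (Fin u → ℝ) × (Fin u → ℝ),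
        (∀ i, 0 < x.2.2.1 i) ∧
        0 = Λ - (Matrix.diagonal x.1 * M * Matrix.diagonal B * Pᵀ) *ᵥ x.2.2.1 -
            Matrix.diagonal μ *ᵥ x.1 + Matrix.diagonal η *ᵥ x.2.2.2 ∧
        0 = (Matrix.diagonal x.1 * M * Matrix.diagonal B * Pᵀ) *ᵥ x.2.2.1 -
            Matrix.diagonal (fun i => ν i + μ i) *ᵥ x.2.1 ∧
        0 = Matrix.diagonal ν *ᵥ x.2.1 -
            Matrix.diagonal (fun i => γ i + μ i + δ i) *ᵥ x.2.2.1 ∧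
        0 = Matrix.diagonal γ *ᵥ x.2.2.1 -
            Matrix.diagonal (fun i => η i + μ i) *ᵥ x.2.2.2) ↔
      (∃! y : Fin u → ℝ, (∀ i, 0 < y i) ∧ gmap μ ν γ δ η Sstar B M P y = y)) := by
  have hcpos : ∀ i, 0 < γ i + μ i + δ i := fun i => by linarith [hγ i, hμ i, hδ i]
  have hc : ∀ i, γ i + μ i + δ i ≠ 0 := fun i => (hcpos i).ne'
  have hepos : ∀ i, 0 < η i + μ i := fun i => by linarith [hη i, hμ i]
  have he : ∀ i, η i + μ i ≠ 0 := fun i => (hepos i).ne'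
  have hnpos : ∀ i, 0 < ν i + μ i := fun i => by linarith [hν i, hμ i]
  have hn : ∀ i, ν i + μ i ≠ 0 := fun i => (hnpos i).ne'
  have hμ' : ∀ i, μ i ≠ 0 := fun i => (hμ i).ne'
  have key : ∀ S E I R : Fin u → ℝ, (∀ i, 0 < I i) →
      ((0 = Λ - (Matrix.diagonal S * M * Matrix.diagonal B * Pᵀ) *ᵥ I -
            Matrix.diagonal μ *ᵥ S + Matrix.diagonal η *ᵥ R ∧
        0 = (Matrix.diagonal S * M * Matrix.diagonal B * Pᵀ) *ᵥ I -
            Matrix.diagonal (fun i => ν i + μ i) *ᵥ E ∧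
        0 = Matrix.diagonal ν *ᵥ E - Matrix.diagonal (fun i => γ i + μ i + δ i) *ᵥ I ∧
        0 = Matrix.diagonal γ *ᵥ I - Matrix.diagonal (fun i => η i + μ i) *ᵥ R) ↔
      ((∀ i, 0 < E i) ∧ gmap μ ν γ δ η Sstar B M P E = E ∧
        S = Sstar - Kmat μ ν γ δ η *ᵥ E ∧ I = Lmat μ ν γ δ *ᵥ E ∧
        R = Amat μ ν γ δ η *ᵥ E)) := by
    intro S E I R hI
    constructor
    · rintro ⟨h1, h2, h3, h4⟩
      have e1 : ∀ i, Λ i - S i * (M *ᵥ (Matrix.diagonal B *ᵥ (Pᵀ *ᵥ I))) i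
          - μ i * S i + η i * R i = 0 := fun i => by
        have h := congrFun h1 i
        simp only [Pi.zero_apply, Pi.sub_apply, Pi.add_apply, diagmul_apply, Matrix.mulVec_diagonal] at h
        linarith
      have e2 : ∀ i, S i * (M *ᵥ (Matrix.diagonal B *ᵥ (Pᵀ *ᵥ I))) i
          = (ν i + μ i) * E i := fun i => by
        have h := congrFun h2 i
        simp only [Pi.zero_apply, Pi.sub_apply, Pi.add_apply, diagmul_apply, Matrix.mulVec_diagonal] at h
        linarith
      have e3 : ∀ i, ν i * E i = (γ i + μ i + δ i) * I i := fun i => by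
        have h := congrFun h3 i
        simp only [Pi.zero_apply, Pi.sub_apply, Pi.add_apply, Matrix.mulVec_diagonal] at h
        linarith
      have e4 : ∀ i, γ i * I i = (η i + μ i) * R i := fun i => by
        have h := congrFun h4 i
        simp only [Pi.zero_apply, Pi.sub_apply, Pi.add_apply, Matrix.mulVec_diagonal] at h
        linarith
      have hEpos : ∀ i, 0 < E i := fun i => by
        have h := e3 i
        have h2 : 0 < (γ i + μ i + δ i) * I i := mul_pos (hcpos i) (hI i)
        nlinarith [hν i]
      have hIe : I = Lmat μ ν γ δ *ᵥ E := by
        funext i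
        rw [Lmat_apply, e3 i, inv_mul_cancel_left₀ (hc i)]
      have hRe : R = Amat μ ν γ δ η *ᵥ E := by
        funext i
        rw [Amat_apply, e3 i, inv_mul_cancel_left₀ (hc i), e4 i,
          inv_mul_cancel_left₀ (he i)]
      have hSe : S = Sstar - Kmat μ ν γ δ η *ᵥ E := by
        funext i
        have hμS : μ i * S i = Λ i - (ν i + μ i) * E i + η i * R i := by
          linarith [e1 i, e2 i]
        have hSval : S i = (μ i)⁻¹ * (Λ i - (ν i + μ i) * E i + η i * R i) := by
          rw [← hμS, inv_mul_cancel_left₀ (hμ' i)]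
        simp only [Pi.sub_apply, Kmat_apply, ← hRe, hSstar i]
        rw [hSval]
        field_simp
        ring
      refine ⟨hEpos, ?_, hSe, hIe, hRe⟩
      funext i
      have hSi : Sstar i - (Kmat μ ν γ δ η *ᵥ E) i = S i := by
        rw [hSe]; simp [Pi.sub_apply]
      rw [gmap_apply, ← hIe, hSi, e2 i, inv_mul_cancel_left₀ (hn i)]
    · rintro ⟨hEpos, hg, hS, hIe, hRe⟩
      have hIi : ∀ i, I i = (γ i + μ i + δ i)⁻¹ * (ν i * E i) := fun i => by
        rw [hIe, Lmat_apply]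
      have hRi : ∀ i, R i =
          (η i + μ i)⁻¹ * (γ i * ((γ i + μ i + δ i)⁻¹ * (ν i * E i))) := fun i => by
        rw [hRe, Amat_apply]
      have hSi : ∀ i, Sstar i - (Kmat μ ν γ δ η *ᵥ E) i = S i := fun i => by
        rw [hS]; simp [Pi.sub_apply]
      have hSw : ∀ i, S i * (M *ᵥ (Matrix.diagonal B *ᵥ (Pᵀ *ᵥ I))) i
          = (ν i + μ i) * E i := fun i => by
        have hg' := congrFun hg i
        rw [gmap_apply, ← hIe, hSi i] at hg'
        have h := congrArg (fun t => (ν i + μ i) * t) hg'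
        rw [mul_inv_cancel_left₀ (hn i)] at h
        exact h
      have hmuS : ∀ i, μ i * S i = Λ i - (ν i + μ i) * E i + η i * R i := fun i => by
        rw [← hSi i, Kmat_apply, ← hRe, hSstar i]
        field_simp [hμ' i]
        ring
      refine ⟨?_, ?_, ?_, ?_⟩
      · funext i
        simp only [Pi.zero_apply, Pi.sub_apply, Pi.add_apply, diagmul_apply,
          Matrix.mulVec_diagonal]
        linarith [hSw i, hmuS i]
      · funext i
        simp only [Pi.zero_apply, Pi.sub_apply, Pi.add_apply, diagmul_apply,
          Matrix.mulVec_diagonal]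
        linarith [hSw i]
      · funext i
        simp only [Pi.zero_apply, Pi.sub_apply, Matrix.mulVec_diagonal]
        rw [hIi i, mul_inv_cancel_left₀ (hc i)]
        ring
      · funext i
        simp only [Pi.zero_apply, Pi.sub_apply, Matrix.mulVec_diagonal]
        rw [hIi i, hRi i, mul_inv_cancel_left₀ (he i)]
        ring
  refine ⟨key, ?_⟩
  have hLpos : ∀ y : Fin u → ℝ, (∀ i, 0 < y i) → ∀ i, 0 < (Lmat μ ν γ δ *ᵥ y) i := by
    intro y hy i
    rw [Lmat_apply]
    exact mul_pos (inv_pos.mpr (hcpos i)) (mul_pos (hν i) (hy i))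
  constructor
  · rintro ⟨x, ⟨hxI, hx1, hx2, hx3, hx4⟩, hxu⟩
    obtain ⟨hEpos, hg, hS, hIe, hRe⟩ :=
      (key x.1 x.2.1 x.2.2.1 x.2.2.2 hxI).mp ⟨hx1, hx2, hx3, hx4⟩
    refine ⟨x.2.1, ⟨hEpos, hg⟩, ?_⟩
    rintro y ⟨hy, hgy⟩
    have hLy := hLpos y hy
    have heq := (key (Sstar - Kmat μ ν γ δ η *ᵥ y) y (Lmat μ ν γ δ *ᵥ y)
      (Amat μ ν γ δ η *ᵥ y) hLy).mpr ⟨hy, hgy, rfl, rfl, rfl⟩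
    have hx := hxu (Sstar - Kmat μ ν γ δ η *ᵥ y, y, Lmat μ ν γ δ *ᵥ y,
      Amat μ ν γ δ η *ᵥ y) ⟨hLy, heq.1, heq.2.1, heq.2.2.1, heq.2.2.2⟩
    exact congrArg (fun t => t.2.1) hx
  · rintro ⟨y, ⟨hy, hgy⟩, hyu⟩
    have hLy := hLpos y hy
    have heq := (key (Sstar - Kmat μ ν γ δ η *ᵥ y) y (Lmat μ ν γ δ *ᵥ y)
      (Amat μ ν γ δ η *ᵥ y) hLy).mpr ⟨hy, hgy, rfl, rfl, rfl⟩
    refine ⟨(Sstar - Kmat μ ν γ δ η *ᵥ y, y, Lmat μ ν γ δ *ᵥ y, Amat μ ν γ δ η *ᵥ y),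
      ⟨hLy, heq.1, heq.2.1, heq.2.2.1, heq.2.2.2⟩, ?_⟩
    rintro ⟨S, E, I, R⟩ ⟨hI, h1, h2, h3, h4⟩
    obtain ⟨hEpos, hg, hS, hIe, hRe⟩ := (key S E I R hI).mp ⟨h1, h2, h3, h4⟩
    have hEy : E = y := hyu E ⟨hEpos, hg⟩
    subst hEy
    rw [hS, hIe, hRe]
end

section
/- Assume all entries of B are positive, the u×u matrix M·Pᵀ is irreducible (i.e., for every pair (i,j) there exists an integer n ≥ 1 with ((MPᵀ)^n)_{ij} > 0), and R0^DD > 1, where R0^DD = ρ(diag(S*)·M·diag(B)·Pᵀ·diag(ν)·diag((μ+ν)∘(μ+γ+δ))⁻¹). Then the density-dependent model has a unique endemic equilibrium: there exists exactly one tuple (S,E,I,R) ∈ (ℝ^u)^4 with all entries of I positive satisfying 0 = Λ − diag(S)·M·diag(B)·Pᵀ·I − diag(μ)·S + diag(η)·R, 0 = diag(S)·M·diag(B)·Pᵀ·I − diag(ν+μ)·E, 0 = diag(ν)·E − diag(γ+μ+δ)·I, and 0 = diag(γ)·I − diag(η+μ)·R. -/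
open Matrix

namespace Stmt16Aux


lemma sum_pos_iff {ι : Type*} [Fintype ι] {f : ι → ℝ} (hf : ∀ i, 0 ≤ f i) :
    (0 < ∑ i, f i) ↔ ∃ i, 0 < f i := by
  constructor
  · intro h
    by_contra hc
    push_neg at hc
    have hz : ∀ i ∈ Finset.univ, f i = 0 := fun i _ => le_antisymm (hc i) (hf i)
    rw [Finset.sum_eq_zero hz] at h
    exact lt_irrefl 0 h
  · rintro ⟨i, hi⟩
    exact Finset.sum_pos' (fun j _ => hf j) ⟨i, Finset.mem_univ i, hi⟩

lemma mul_pos_iff_of_nonneg {a b : ℝ} (ha : 0 ≤ a) (hb : 0 ≤ b) :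
    0 < a * b ↔ 0 < a ∧ 0 < b := by
  constructor
  · intro h
    rcases ha.eq_or_lt with h' | h'
    · rw [← h', zero_mul] at h; exact absurd h (lt_irrefl 0)
    rcases hb.eq_or_lt with h'' | h''
    · rw [← h'', mul_zero] at h; exact absurd h (lt_irrefl 0)
    exact ⟨h', h''⟩
  · rintro ⟨h1, h2⟩; exact mul_pos h1 h2

variable {u : ℕ}

lemma mulVec_apply' (A : Matrix (Fin u) (Fin u) ℝ) (x : Fin u → ℝ) (i : Fin u) :
    (A *ᵥ x) i = ∑ j, A i j * x j := rfl

lemma mulVec_nonneg {A : Matrix (Fin u) (Fin u) ℝ} (hA : ∀ i j, 0 ≤ A i j)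
    {x : Fin u → ℝ} (hx : ∀ i, 0 ≤ x i) : ∀ i, 0 ≤ (A *ᵥ x) i :=
  fun i => by rw [mulVec_apply']; exact Finset.sum_nonneg fun j _ => mul_nonneg (hA i j) (hx j)

lemma mulVec_mono {A : Matrix (Fin u) (Fin u) ℝ} (hA : ∀ i j, 0 ≤ A i j)
    {x y : Fin u → ℝ} (h : ∀ i, x i ≤ y i) : ∀ i, (A *ᵥ x) i ≤ (A *ᵥ y) i :=
  fun i => by
    rw [mulVec_apply', mulVec_apply']
    exact Finset.sum_le_sum fun j _ => mul_le_mul_of_nonneg_left (h j) (hA i j)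

lemma pow_entry_nonneg {A : Matrix (Fin u) (Fin u) ℝ} (hA : ∀ i j, 0 ≤ A i j) :
    ∀ (k : ℕ) (i j : Fin u), 0 ≤ (A ^ k) i j := by
  intro k
  induction k with
  | zero =>
    intro i j
    simp only [pow_zero]
    by_cases h : i = j <;> simp [Matrix.one_apply, h]
  | succ n ih =>
    intro i j
    rw [pow_succ, Matrix.mul_apply]
    exact Finset.sum_nonneg fun t _ => mul_nonneg (ih i t) (hA t j)

lemma pow_pattern {A B : Matrix (Fin u) (Fin u) ℝ} (hA : ∀ i j, 0 ≤ A i j)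
    (hB : ∀ i j, 0 ≤ B i j) (h : ∀ i j, 0 < A i j ↔ 0 < B i j) :
    ∀ (k : ℕ) (i j : Fin u), 0 < (A ^ k) i j ↔ 0 < (B ^ k) i j := by
  intro k
  induction k with
  | zero => intro i j; simp
  | succ n ih =>
    intro i j
    rw [pow_succ, pow_succ, Matrix.mul_apply, Matrix.mul_apply]
    rw [sum_pos_iff (fun t => mul_nonneg (pow_entry_nonneg hA n i t) (hA t j)),
      sum_pos_iff (fun t => mul_nonneg (pow_entry_nonneg hB n i t) (hB t j))]
    refine exists_congr fun t => ?_
    rw [mul_pos_iff_of_nonneg (pow_entry_nonneg hA n i t) (hA t j),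
      mul_pos_iff_of_nonneg (pow_entry_nonneg hB n i t) (hB t j), ih i t, h t j]



lemma exists_subinvariant {u : ℕ} (A : Matrix (Fin u) (Fin u) ℝ)
    (hA : ∀ i j, 0 ≤ A i j) (h1 : 1 < specRad A) :
    ∃ s : ℝ, 1 < s ∧ ∃ z : Fin u → ℝ, (∀ i, 0 ≤ z i) ∧ (∃ i, 0 < z i) ∧
      ∀ i, s * z i ≤ (A *ᵥ z) i := by
  classical
  set A' := A.map (fun x : ℝ => (x : ℂ)) with hA'
  have hne : ((fun z : ℂ => ‖z‖) '' spectrum ℂ A').Nonempty := by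
    rcases Set.eq_empty_or_nonempty ((fun z : ℂ => ‖z‖) '' spectrum ℂ A') with h | h
    · exfalso
      rw [specRad, ← hA', h, Real.sSup_empty] at h1
      linarith
    · exact h
  obtain ⟨a, ha, hgt⟩ := exists_lt_of_lt_csSup hne h1
  obtain ⟨lam, hlam, rfl⟩ := ha
  have hndet : (algebraMap ℂ (Matrix (Fin u) (Fin u) ℂ) lam - A').det = 0 := by
    have hnu := spectrum.mem_iff.mp hlam
    by_contra hd
    exact hnu ((Matrix.isUnit_iff_isUnit_det _).mpr (isUnit_iff_ne_zero.mpr hd))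
  obtain ⟨y, hy0, hy⟩ := (Matrix.exists_mulVec_eq_zero_iff).mpr hndet
  have hAy : A' *ᵥ y = lam • y := by
    rw [Matrix.sub_mulVec] at hy
    have h2 : (algebraMap ℂ (Matrix (Fin u) (Fin u) ℂ) lam) *ᵥ y = lam • y := by
      rw [Algebra.algebraMap_eq_smul_one, Matrix.smul_mulVec, Matrix.one_mulVec]
    have h3 := sub_eq_zero.mp hy
    rw [h2] at h3
    exact h3.symm
  refine ⟨‖lam‖, hgt, fun i => ‖y i‖,
    fun i => norm_nonneg _, ?_, ?_⟩
  · have : ∃ i, y i ≠ 0 := by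
      by_contra hc
      push_neg at hc
      exact hy0 (funext hc)
    obtain ⟨i, hi⟩ := this
    exact ⟨i, norm_pos_iff.mpr hi⟩
  · intro i
    have hcoord : ∑ j, A' i j * y j = lam * y i := by
      have := congrFun hAy i
      simpa [Matrix.mulVec, dotProduct, Pi.smul_apply] using this
    have hle : ‖∑ j, A' i j * y j‖ ≤ ∑ j, A i j * ‖y j‖ := by
      refine le_trans (norm_sum_le _ _) (le_of_eq ?_)
      refine Finset.sum_congr rfl fun j _ => ?_
      rw [norm_mul]
      congr 1
      rw [hA', Matrix.map_apply, Complex.norm_of_nonneg (hA i j)]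
    rw [hcoord, norm_mul] at hle
    calc ‖lam‖ * ‖y i‖ ≤ ∑ j, A i j * ‖y j‖ := hle
    _ = (A *ᵥ fun j => ‖y j‖) i := rfl

lemma exists_pos_subinvariant {u : ℕ} (hu : 0 < u) (A : Matrix (Fin u) (Fin u) ℝ)
    (hA : ∀ i j, 0 ≤ A i j)
    (hconn : ∀ i j, ∃ n, 1 ≤ n ∧ 0 < (A ^ n) i j)
    {s : ℝ} (hs : 0 < s) {z : Fin u → ℝ} (hz0 : ∀ i, 0 ≤ z i) (hzpos : ∃ i, 0 < z i)
    (hz : ∀ i, s * z i ≤ (A *ᵥ z) i) :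
    ∃ x : Fin u → ℝ, (∀ i, 0 < x i) ∧ ∀ i, s * x i ≤ (A *ᵥ x) i := by
  classical
  obtain ⟨j₀, hj₀⟩ := hzpos
  choose n hn1 hnpos using fun i => hconn i j₀
  have hne : Nonempty (Fin u) := ⟨⟨0, hu⟩⟩
  set N := Finset.univ.sup n + 1 with hN
  set x : Fin u → ℝ := fun i => ∑ k ∈ Finset.range N, ((A ^ k) *ᵥ z) i with hx
  have hterm_nonneg : ∀ k (i : Fin u), 0 ≤ ((A ^ k) *ᵥ z) i :=
    fun k => mulVec_nonneg (pow_entry_nonneg hA k) hz0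
  have hmemN : ∀ i : Fin u, n i ∈ Finset.range N := by
    intro i
    exact Finset.mem_range.mpr (Nat.lt_succ_of_le (Finset.le_sup (Finset.mem_univ i)))
  refine ⟨x, ?_, ?_⟩
  · intro i
    have h1 : ((A ^ n i) *ᵥ z) i ≤ x i := by
      rw [hx]
      exact Finset.single_le_sum (fun k _ => hterm_nonneg k i) (hmemN i)
    have h2 : 0 < ((A ^ n i) *ᵥ z) i := by
      rw [mulVec_apply']
      have hterm : 0 < (A ^ n i) i j₀ * z j₀ := mul_pos (hnpos i) hj₀
      refine lt_of_lt_of_le hterm ?_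
      exact Finset.single_le_sum
        (fun j _ => mul_nonneg (pow_entry_nonneg hA (n i) i j) (hz0 j)) (Finset.mem_univ j₀)
    exact lt_of_lt_of_le h2 h1
  · intro i
    have hAx : (A *ᵥ x) i = ∑ k ∈ Finset.range N, ((A ^ k) *ᵥ (A *ᵥ z)) i := by
      rw [mulVec_apply']
      have : ∀ j, x j = ∑ k ∈ Finset.range N, ((A ^ k) *ᵥ z) j := fun j => rfl
      simp_rw [this, Finset.mul_sum]
      rw [Finset.sum_comm]
      refine Finset.sum_congr rfl fun k _ => ?_
      have : A *ᵥ ((A ^ k) *ᵥ z) = (A ^ k) *ᵥ (A *ᵥ z) := by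
        rw [Matrix.mulVec_mulVec, Matrix.mulVec_mulVec, ← pow_succ', ← pow_succ]
      rw [← congrFun this i, mulVec_apply']
    rw [hAx]
    have : ∀ k ∈ Finset.range N, s * ((A ^ k) *ᵥ z) i ≤ ((A ^ k) *ᵥ (A *ᵥ z)) i := by
      intro k _
      have hmono := mulVec_mono (pow_entry_nonneg hA k) (x := fun j => s * z j) (y := A *ᵥ z)
        (fun j => hz j) i
      refine le_trans (le_of_eq ?_) hmono
      rw [mulVec_apply', mulVec_apply', Finset.mul_sum]
      exact Finset.sum_congr rfl fun j _ => by ring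
    calc s * x i = ∑ k ∈ Finset.range N, s * ((A ^ k) *ᵥ z) i := by
          rw [hx, Finset.mul_sum]
    _ ≤ ∑ k ∈ Finset.range N, ((A ^ k) *ᵥ (A *ᵥ z)) i := Finset.sum_le_sum this
end Stmt16Aux

section FixTest
open Matrix Stmt16Aux Filter Topology

lemma Stmt16Aux.exists_unique_fixed {u : ℕ} (hu : 0 < u)
    (F : Matrix (Fin u) (Fin u) ℝ) (hF : ∀ i j, 0 ≤ F i j)
    (hrow : ∀ i, ∃ k, 0 < F i k)
    (Lam m d : Fin u → ℝ)
    (hLam : ∀ i, 0 < Lam i) (hm : ∀ i, 0 < m i) (hd : ∀ i, 0 < d i)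
    (x : Fin u → ℝ) (hx : ∀ i, 0 < x i) (s : ℝ) (hs : 1 < s)
    (hsub : ∀ i, s * (m i * x i) ≤ Lam i * (F *ᵥ x) i) :
    ∃! I : Fin u → ℝ, (∀ i, 0 < I i) ∧
      ∀ i, I i * (m i + d i * (F *ᵥ I) i) = Lam i * (F *ᵥ I) i := by
  classical
  have hne : Nonempty (Fin u) := ⟨⟨0, hu⟩⟩
  set T : (Fin u → ℝ) → Fin u → ℝ :=
    fun I i => Lam i * (F *ᵥ I) i / (m i + d i * (F *ᵥ I) i) with hT
  -- denominator positivity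
  have hden : ∀ {I : Fin u → ℝ}, (∀ i, 0 ≤ I i) → ∀ i, 0 < m i + d i * (F *ᵥ I) i := by
    intro I hI i
    have := mulVec_nonneg hF hI i
    nlinarith [hm i, (hd i).le]
  -- g monotone
  have gmono : ∀ (i : Fin u) (w w' : ℝ), 0 ≤ w → w ≤ w' →
      Lam i * w / (m i + d i * w) ≤ Lam i * w' / (m i + d i * w') := by
    intro i w w' hw hww
    have h1 : 0 < m i + d i * w := by nlinarith [hm i, (hd i).le]
    have h2 : 0 < m i + d i * w' := by nlinarith [hm i, (hd i).le]
    rw [div_le_div_iff₀ h1 h2]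
    nlinarith [mul_nonneg (mul_nonneg (hLam i).le (hm i).le) (sub_nonneg.mpr hww),
      mul_nonneg (mul_nonneg (mul_nonneg (hLam i).le (hd i).le) hw) (sub_nonneg.mpr hww)]
  have Tmono : ∀ {I J : Fin u → ℝ}, (∀ i, 0 ≤ I i) → (∀ i, I i ≤ J i) →
      ∀ i, T I i ≤ T J i := by
    intro I J hI hIJ i
    exact gmono i _ _ (mulVec_nonneg hF hI i) (mulVec_mono hF hIJ i)
  -- fixed point characterization
  have Tfix_iff : ∀ {I : Fin u → ℝ}, (∀ i, 0 ≤ I i) →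
      ((∀ i, T I i = I i) ↔ ∀ i, I i * (m i + d i * (F *ᵥ I) i) = Lam i * (F *ᵥ I) i) := by
    intro I hI
    refine forall_congr' fun i => ?_
    rw [hT]
    rw [div_eq_iff (hden hI i).ne']
    exact eq_comm
  -- subsolution I₀
  have hs1 : (0:ℝ) < s - 1 := by linarith
  have hs0 : (0:ℝ) < s := by linarith
  have hwx : ∀ i, 0 < (F *ᵥ x) i := by
    intro i
    have h1 : 0 < s * (m i * x i) := mul_pos hs0 (mul_pos (hm i) (hx i))
    have h2 := lt_of_lt_of_le h1 (hsub i)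
    by_contra hc
    push_neg at hc
    nlinarith [hLam i]
  set ε : ℝ := Finset.univ.inf' (Finset.univ_nonempty) (fun i => (s - 1) * m i / (d i * (F *ᵥ x) i))
    with hεdef
  have hε : 0 < ε := by
    rw [hεdef]
    rw [Finset.lt_inf'_iff]
    intro i _
    have := hwx i
    have := hm i
    have := hd i
    positivity
  have hεle : ∀ i, ε * (d i * (F *ᵥ x) i) ≤ (s - 1) * m i := by
    intro i
    have h1 : ε ≤ (s - 1) * m i / (d i * (F *ᵥ x) i) :=
      Finset.inf'_le _ (Finset.mem_univ i)
    have h2 : 0 < d i * (F *ᵥ x) i := mul_pos (hd i) (hwx i)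
    calc ε * (d i * (F *ᵥ x) i) ≤ ((s - 1) * m i / (d i * (F *ᵥ x) i)) * (d i * (F *ᵥ x) i) :=
          mul_le_mul_of_nonneg_right h1 h2.le
    _ = (s - 1) * m i := div_mul_cancel₀ _ h2.ne'
  set I₀ : Fin u → ℝ := fun i => ε * x i with hI₀
  have hI₀pos : ∀ i, 0 < I₀ i := fun i => mul_pos hε (hx i)
  have hFI₀ : ∀ i, (F *ᵥ I₀) i = ε * (F *ᵥ x) i := by
    intro i
    rw [mulVec_apply', mulVec_apply', Finset.mul_sum]
    exact Finset.sum_congr rfl fun j _ => by rw [hI₀]; ring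
  have hsubI₀ : ∀ i, I₀ i ≤ T I₀ i := by
    intro i
    rw [hT]
    rw [le_div_iff₀ (hden (fun j => (hI₀pos j).le) i)]
    rw [hFI₀ i]
    have h1 := hsub i
    have h2 := hεle i
    have h3 := (hx i).le
    have h4 := hε.le
    have h5 := hwx i
    have e1 : ε * (x i * (ε * (d i * (F *ᵥ x) i))) ≤ ε * (x i * ((s - 1) * m i)) :=
      mul_le_mul_of_nonneg_left (mul_le_mul_of_nonneg_left h2 h3) h4
    have e2 : ε * (s * (m i * x i)) ≤ ε * (Lam i * (F *ᵥ x) i) :=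
      mul_le_mul_of_nonneg_left h1 h4
    show ε * x i * (m i + d i * (ε * (F *ᵥ x) i)) ≤ Lam i * (ε * (F *ᵥ x) i)
    nlinarith [e1, e2]
  -- monotone iteration
  set seq : ℕ → Fin u → ℝ := fun n => T^[n] I₀ with hseq
  have hseq_succ : ∀ n, seq (n + 1) = T (seq n) := by
    intro n; rw [hseq]; simp [Function.iterate_succ_apply']
  have hseq_zero : seq 0 = I₀ := by rw [hseq]; simp
  have hge : ∀ n i, I₀ i ≤ seq n i := by
    intro n
    induction n with
    | zero => intro i; rw [hseq_zero]
    | succ k ih =>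
      intro i
      rw [hseq_succ]
      exact le_trans (hsubI₀ i) (Tmono (fun j => (hI₀pos j).le) ih i)
  have hseq_nonneg : ∀ n i, 0 ≤ seq n i := fun n i => le_trans (hI₀pos i).le (hge n i)
  have hmonoseq : ∀ n i, seq n i ≤ seq (n + 1) i := by
    intro n
    induction n with
    | zero => intro i; rw [hseq_succ, hseq_zero]; exact hsubI₀ i
    | succ k ih =>
      intro i
      have hstep := Tmono (hseq_nonneg k) ih i
      rw [← hseq_succ k] at hstep
      rw [hseq_succ (k + 1)]
      exact hstep
  have hbound : ∀ n i, seq n i ≤ max (I₀ i) (Lam i / d i) := by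
    intro n
    induction n with
    | zero => intro i; rw [hseq_zero]; exact le_max_left _ _
    | succ k ih =>
      intro i
      rw [hseq_succ]
      refine le_trans ?_ (le_max_right _ _)
      rw [hT]
      have hd2 := hden (hseq_nonneg k) i
      rw [div_le_div_iff₀ hd2 (hd i)]
      have hw := mulVec_nonneg hF (hseq_nonneg k) i
      nlinarith [hLam i, hm i, (hd i).le, mul_nonneg (hLam i).le (hm i).le]
  have hbddrange : ∀ i, BddAbove (Set.range fun n => seq n i) := by
    intro i
    exact ⟨max (I₀ i) (Lam i / d i), by rintro _ ⟨n, rfl⟩; exact hbound n i⟩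
  have hmono' : ∀ i, Monotone fun n => seq n i :=
    fun i => monotone_nat_of_le_succ fun n => hmonoseq n i
  set Istar : Fin u → ℝ := fun i => ⨆ n, seq n i with hIstar
  have htend : ∀ i, Tendsto (fun n => seq n i) atTop (𝓝 (Istar i)) :=
    fun i => tendsto_atTop_ciSup (hmono' i) (hbddrange i)
  have hIstar_ge : ∀ i, I₀ i ≤ Istar i := by
    intro i
    calc I₀ i = seq 0 i := by rw [hseq_zero]
    _ ≤ Istar i := le_ciSup (hbddrange i) 0
  have hIstar_pos : ∀ i, 0 < Istar i := fun i => lt_of_lt_of_le (hI₀pos i) (hIstar_ge i)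
  have hIstar_nonneg : ∀ i, 0 ≤ Istar i := fun i => (hIstar_pos i).le
  have htendw : ∀ i, Tendsto (fun n => (F *ᵥ seq n) i) atTop (𝓝 ((F *ᵥ Istar) i)) := by
    intro i
    have heq : ∀ n, (F *ᵥ seq n) i = ∑ j, F i j * seq n j := fun n => rfl
    rw [mulVec_apply']
    simp_rw [heq]
    exact tendsto_finset_sum _ fun j _ => (htend j).const_mul (F i j)
  have htendT : ∀ i, Tendsto (fun n => T (seq n) i) atTop (𝓝 (T Istar i)) := by
    intro i
    rw [hT]
    exact Tendsto.div ((htendw i).const_mul (Lam i))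
      (tendsto_const_nhds.add ((htendw i).const_mul (d i))) (hden hIstar_nonneg i).ne'
  have hfixIstar : ∀ i, T Istar i = Istar i := by
    intro i
    have h1 : Tendsto (fun n => seq (n + 1) i) atTop (𝓝 (Istar i)) := by
      have := (htend i).comp (tendsto_add_atTop_nat 1)
      exact this
    have h2 : (fun n => seq (n + 1) i) = fun n => T (seq n) i := by
      funext n; rw [hseq_succ]
    rw [h2] at h1
    exact tendsto_nhds_unique (htendT i) h1
  -- row positivity consequence
  have hwpos : ∀ {I : Fin u → ℝ}, (∀ i, 0 < I i) → ∀ i, 0 < (F *ᵥ I) i := by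
    intro I hI i
    obtain ⟨k, hk⟩ := hrow i
    rw [mulVec_apply']
    refine lt_of_lt_of_le (mul_pos hk (hI k)) ?_
    exact Finset.single_le_sum (fun j _ => mul_nonneg (hF i j) (hI j).le) (Finset.mem_univ k)
  -- uniqueness core
  have key : ∀ I J : Fin u → ℝ, (∀ i, 0 < I i) →
      (∀ i, I i * (m i + d i * (F *ᵥ I) i) = Lam i * (F *ᵥ I) i) →
      (∀ i, 0 < J i) →
      (∀ i, J i * (m i + d i * (F *ᵥ J) i) = Lam i * (F *ᵥ J) i) →
      ∀ i, I i ≤ J i := by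
    intro I J hI hfixI hJ hfixJ
    have hTI : ∀ i, T I i = I i := (Tfix_iff (fun i => (hI i).le)).mpr hfixI
    have hTJ : ∀ i, T J i = J i := (Tfix_iff (fun i => (hJ i).le)).mpr hfixJ
    set θ : ℝ := Finset.univ.inf' Finset.univ_nonempty (fun i => J i / I i) with hθdef
    obtain ⟨i₀, _, hi₀⟩ := Finset.exists_mem_eq_inf' (Finset.univ_nonempty) (fun i => J i / I i)
    have hθeq : θ = J i₀ / I i₀ := by rw [hθdef, hi₀]
    have hθpos : 0 < θ := by
      rw [hθeq]
      exact div_pos (hJ i₀) (hI i₀)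
    have hθle : ∀ i, θ * I i ≤ J i := by
      intro i
      have h1 : θ ≤ J i / I i := Finset.inf'_le _ (Finset.mem_univ i)
      rw [le_div_iff₀ (hI i)] at h1
      linarith
    by_cases hθ1 : 1 ≤ θ
    · intro i
      calc I i = 1 * I i := (one_mul _).symm
      _ ≤ θ * I i := mul_le_mul_of_nonneg_right hθ1 (hI i).le
      _ ≤ J i := hθle i
    · exfalso
      push_neg at hθ1
      have hwI := hwpos hI i₀
      have hwJθ : θ * (F *ᵥ I) i₀ ≤ (F *ᵥ J) i₀ := by
        have h1 := mulVec_mono hF (x := fun i => θ * I i) (y := J) hθle i₀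
        refine le_trans (le_of_eq ?_) h1
        rw [mulVec_apply', mulVec_apply', Finset.mul_sum]
        exact Finset.sum_congr rfl fun j _ => by ring
      have hgm : Lam i₀ * (θ * (F *ᵥ I) i₀) / (m i₀ + d i₀ * (θ * (F *ᵥ I) i₀)) ≤ T J i₀ :=
        gmono i₀ _ _ (mul_nonneg hθpos.le hwI.le) hwJθ
      have hstrict : θ * (Lam i₀ * (F *ᵥ I) i₀ / (m i₀ + d i₀ * (F *ᵥ I) i₀)) <
          Lam i₀ * (θ * (F *ᵥ I) i₀) / (m i₀ + d i₀ * (θ * (F *ᵥ I) i₀)) := by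
        have hden1 : 0 < m i₀ + d i₀ * (F *ᵥ I) i₀ := hden (fun j => (hI j).le) i₀
        have hden2 : 0 < m i₀ + d i₀ * (θ * (F *ᵥ I) i₀) := by
          nlinarith [hm i₀, (hd i₀).le, hθpos.le, hwI.le, mul_nonneg (hd i₀).le
            (mul_nonneg hθpos.le hwI.le)]
        rw [mul_div_assoc'] -- θ * (a / b) = θ * a / b
        rw [div_lt_div_iff₀ hden1 hden2]
        nlinarith [mul_pos (mul_pos (mul_pos hθpos (mul_pos (hLam i₀) hwI)) (hd i₀))
          (mul_pos hwI (sub_pos.mpr hθ1))]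
      have hfin : θ * I i₀ < J i₀ := by
        calc θ * I i₀ = θ * T I i₀ := by rw [hTI i₀]
        _ = θ * (Lam i₀ * (F *ᵥ I) i₀ / (m i₀ + d i₀ * (F *ᵥ I) i₀)) := by rw [hT]
        _ < Lam i₀ * (θ * (F *ᵥ I) i₀) / (m i₀ + d i₀ * (θ * (F *ᵥ I) i₀)) := hstrict
        _ ≤ T J i₀ := hgm
        _ = J i₀ := hTJ i₀
      have heq' : θ * I i₀ = J i₀ := by
        rw [hθeq, div_mul_cancel₀ _ (hI i₀).ne']
      linarith [hfin, heq']
  have hIfix : ∀ i, Istar i * (m i + d i * (F *ᵥ Istar) i) = Lam i * (F *ᵥ Istar) i :=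
    (Tfix_iff hIstar_nonneg).mp hfixIstar
  refine ⟨Istar, ⟨hIstar_pos, hIfix⟩, ?_⟩
  rintro J ⟨hJpos, hJfix⟩
  funext i
  exact le_antisymm (key J Istar hJpos hJfix hIstar_pos hIfix i)
    (key Istar J hIstar_pos hIfix hJpos hJfix i)

end FixTest

/-- if `B > 0`, `M·Pᵀ` is irreducible, and
`R0^DD = ρ(diag(S*)·M·diag(B)·Pᵀ·diag(ν)·diag((μ+ν)∘(μ+γ+δ))⁻¹) > 1`, then the
density-dependent model has a unique endemic equilibrium. -/
theorem stmt16 (u v : ℕ) (hu : 1 ≤ u) (hv : 1 ≤ v)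
    (Λ μ ν γ δ η : Fin u → ℝ)
    (hΛ : ∀ i, 0 < Λ i) (hμ : ∀ i, 0 < μ i) (hν : ∀ i, 0 < ν i) (hγ : ∀ i, 0 < γ i)
    (hδ : ∀ i, 0 ≤ δ i) (hη : ∀ i, 0 ≤ η i)
    (B : Fin v → ℝ) (hB : ∀ j, 0 < B j)
    (M P : Matrix (Fin u) (Fin v) ℝ)
    (hM : ∀ i j, 0 ≤ M i j) (hP : ∀ i j, 0 ≤ P i j)
    (Sstar : Fin u → ℝ) (hSstar : ∀ i, Sstar i = Λ i / μ i)
    (hirr : ∀ i j : Fin u, ∃ n : ℕ, 1 ≤ n ∧ 0 < ((M * Pᵀ) ^ n) i j)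
    (hR0 : 1 < specRad (Matrix.diagonal Sstar * M * Matrix.diagonal B * Pᵀ *
      Matrix.diagonal ν * Matrix.diagonal (fun i => ((μ i + ν i) * (μ i + γ i + δ i))⁻¹))) :
    ∃! x : (Fin u → ℝ) × (Fin u → ℝ) × (Fin u → ℝ) × (Fin u → ℝ),
      (∀ i, 0 < x.2.2.1 i) ∧
      0 = Λ - (Matrix.diagonal x.1 * M * Matrix.diagonal B * Pᵀ) *ᵥ x.2.2.1 -
          Matrix.diagonal μ *ᵥ x.1 + Matrix.diagonal η *ᵥ x.2.2.2 ∧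
      0 = (Matrix.diagonal x.1 * M * Matrix.diagonal B * Pᵀ) *ᵥ x.2.2.1 -
          Matrix.diagonal (fun i => ν i + μ i) *ᵥ x.2.1 ∧
      0 = Matrix.diagonal ν *ᵥ x.2.1 -
          Matrix.diagonal (fun i => γ i + μ i + δ i) *ᵥ x.2.2.1 ∧
      0 = Matrix.diagonal γ *ᵥ x.2.2.1 -
          Matrix.diagonal (fun i => η i + μ i) *ᵥ x.2.2.2 := by
  classical
  open Stmt16Aux in
  have hu0 : 0 < u := hu
  have hne : Nonempty (Fin u) := ⟨⟨0, hu0⟩⟩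
  -- abbreviations
  set e : Fin u → ℝ := fun i => ((μ i + ν i) * (μ i + γ i + δ i))⁻¹ with hedef
  set A : Matrix (Fin u) (Fin u) ℝ := Matrix.diagonal Sstar * M * Matrix.diagonal B * Pᵀ *
      Matrix.diagonal ν * Matrix.diagonal e with hAdef
  set F : Matrix (Fin u) (Fin u) ℝ := M * Matrix.diagonal B * Pᵀ with hFdef
  set G : Matrix (Fin u) (Fin u) ℝ := M * Pᵀ with hGdef
  set c : Fin u → ℝ := fun i => (μ i + ν i) * (μ i + γ i + δ i) / ν i with hcdef
  set m : Fin u → ℝ := fun i => μ i * c i with hmdef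
  set d : Fin u → ℝ := fun i => c i - η i * γ i / (η i + μ i) with hddef
  -- basic positivity
  have hμν : ∀ i, (0:ℝ) < μ i + ν i := fun i => by linarith [hμ i, hν i]
  have hμγδ : ∀ i, (0:ℝ) < μ i + γ i + δ i := fun i => by linarith [hμ i, hγ i, hδ i]
  have hημ : ∀ i, (0:ℝ) < η i + μ i := fun i => by linarith [hη i, hμ i]
  have hepos : ∀ i, 0 < e i := fun i => by
    rw [hedef]
    exact inv_pos.mpr (mul_pos (hμν i) (hμγδ i))
  have hcpos : ∀ i, 0 < c i := fun i => by
    rw [hcdef]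
    exact div_pos (mul_pos (hμν i) (hμγδ i)) (hν i)
  have hmpos : ∀ i, 0 < m i := fun i => by rw [hmdef]; exact mul_pos (hμ i) (hcpos i)
  have hdpos : ∀ i, 0 < d i := by
    intro i
    rw [hddef, hcdef]
    have h1 : η i * γ i / (η i + μ i) ≤ γ i := by
      rw [div_le_iff₀ (hημ i)]
      nlinarith [hγ i, hη i, hμ i]
    have h2 : γ i < (μ i + ν i) * (μ i + γ i + δ i) / ν i := by
      rw [lt_div_iff₀ (hν i)]
      nlinarith [hμ i, hν i, hγ i, hδ i, mul_pos (hμ i) (hμγδ i),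
        mul_nonneg (hν i).le (hδ i)]
    dsimp only
    linarith
  have hSstarpos : ∀ i, 0 < Sstar i := fun i => by
    rw [hSstar i]; exact div_pos (hΛ i) (hμ i)
  -- entries
  have hFentry : ∀ i j, F i j = ∑ t, M i t * B t * P j t := by
    intro i j
    rw [hFdef, Matrix.mul_apply]
    exact Finset.sum_congr rfl fun t _ => by
      rw [Matrix.mul_diagonal, Matrix.transpose_apply]
  have hGentry : ∀ i j, G i j = ∑ t, M i t * P j t := by
    intro i j
    rw [hGdef, Matrix.mul_apply]
    exact Finset.sum_congr rfl fun t _ => by rw [Matrix.transpose_apply]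
  have hFnn : ∀ i j, 0 ≤ F i j := fun i j => by
    rw [hFentry]
    exact Finset.sum_nonneg fun t _ =>
      mul_nonneg (mul_nonneg (hM i t) (hB t).le) (hP j t)
  have hGnn : ∀ i j, 0 ≤ G i j := fun i j => by
    rw [hGentry]
    exact Finset.sum_nonneg fun t _ => mul_nonneg (hM i t) (hP j t)
  have hFG : ∀ i j, 0 < F i j ↔ 0 < G i j := by
    intro i j
    rw [hFentry, hGentry,
      sum_pos_iff (fun t => mul_nonneg (mul_nonneg (hM i t) (hB t).le) (hP j t)),
      sum_pos_iff (fun t => mul_nonneg (hM i t) (hP j t))]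
    refine exists_congr fun t => ?_
    rw [mul_pos_iff_of_nonneg (mul_nonneg (hM i t) (hB t).le) (hP j t),
        mul_pos_iff_of_nonneg (hM i t) (hP j t),
        mul_pos_iff_of_nonneg (hM i t) (hB t).le]
    constructor
    · rintro ⟨⟨h1, _⟩, h2⟩; exact ⟨h1, h2⟩
    · rintro ⟨h1, h2⟩; exact ⟨⟨h1, hB t⟩, h2⟩
  -- rows of F are nonzero
  have hrowF : ∀ i, ∃ k, 0 < F i k := by
    intro i
    obtain ⟨n, hn1, hnpos⟩ := hirr i i
    obtain ⟨n', rfl⟩ : ∃ n', n = n' + 1 := ⟨n - 1, by omega⟩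
    rw [pow_succ'] at hnpos
    rw [Matrix.mul_apply] at hnpos
    rw [sum_pos_iff (fun t => mul_nonneg (hGnn i t) (pow_entry_nonneg hGnn n' t i))] at hnpos
    obtain ⟨t, ht⟩ := hnpos
    have h2 := (mul_pos_iff_of_nonneg (hGnn i t) (pow_entry_nonneg hGnn n' t i)).mp ht
    exact ⟨t, (hFG i t).mpr h2.1⟩
  -- the matrix A
  have hAeq : A = Matrix.diagonal Sstar * F * Matrix.diagonal (fun j => ν j * e j) := by
    rw [hAdef, hFdef]
    have hdd : Matrix.diagonal ν * Matrix.diagonal e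
        = Matrix.diagonal (fun j => ν j * e j) := by
      rw [Matrix.diagonal_mul_diagonal]
    rw [← hdd]
    simp only [Matrix.mul_assoc]
  have hAentry : ∀ i j, A i j = Sstar i * F i j * (ν j * e j) := by
    intro i j
    rw [hAeq, Matrix.mul_diagonal, Matrix.diagonal_mul]
  have hAnn : ∀ i j, 0 ≤ A i j := fun i j => by
    rw [hAentry]
    exact mul_nonneg (mul_nonneg (hSstarpos i).le (hFnn i j))
      (mul_nonneg (hν j).le (hepos j).le)
  -- eigen extraction
  obtain ⟨s, hs, z, hznn, ⟨iz, hzpos⟩, hsubA⟩ := exists_subinvariant A hAnn hR0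
  have hs0 : (0:ℝ) < s := by linarith
  -- transfer to L = diagonal (Λ/m) * F
  set x₀ : Fin u → ℝ := fun j => ν j * e j * z j with hx₀def
  have hx₀nn : ∀ j, 0 ≤ x₀ j := fun j => by
    rw [hx₀def]
    exact mul_nonneg (mul_nonneg (hν j).le (hepos j).le) (hznn j)
  have hx₀pos : ∃ j, 0 < x₀ j := ⟨iz, by
    rw [hx₀def]
    exact mul_pos (mul_pos (hν iz) (hepos iz)) hzpos⟩
  have hzx₀ : ∀ i, z i = c i * x₀ i := by
    intro i
    have h1 : (μ i + ν i) * (μ i + γ i + δ i) ≠ 0 := (mul_pos (hμν i) (hμγδ i)).ne'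
    have hone : c i * (ν i * e i) = 1 := by
      rw [hcdef, hedef]
      dsimp only
      field_simp
      rw [div_self (mul_ne_zero (mul_ne_zero (hν i).ne' (hμν i).ne') (hμγδ i).ne')]
    calc z i = (c i * (ν i * e i)) * z i := by rw [hone, one_mul]
    _ = c i * x₀ i := by rw [hx₀def]; ring
  set L : Matrix (Fin u) (Fin u) ℝ := Matrix.diagonal (fun i => Λ i / m i) * F with hLdef
  have hLentry : ∀ i j, L i j = (Λ i / m i) * F i j := fun i j => by
    rw [hLdef, Matrix.diagonal_mul]
  have hLnn : ∀ i j, 0 ≤ L i j := fun i j => by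
    rw [hLentry]
    exact mul_nonneg (div_pos (hΛ i) (hmpos i)).le (hFnn i j)
  have hLG : ∀ i j, 0 < L i j ↔ 0 < G i j := by
    intro i j
    rw [hLentry, ← hFG i j,
      mul_pos_iff_of_nonneg (div_pos (hΛ i) (hmpos i)).le (hFnn i j)]
    constructor
    · rintro ⟨_, h2⟩; exact h2
    · intro h; exact ⟨div_pos (hΛ i) (hmpos i), h⟩
  have hconnL : ∀ i j, ∃ n, 1 ≤ n ∧ 0 < (L ^ n) i j := by
    intro i j
    obtain ⟨n, hn1, hnpos⟩ := hirr i j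
    exact ⟨n, hn1, (pow_pattern hLnn hGnn hLG n i j).mpr hnpos⟩
  have hLmulVec : ∀ (y : Fin u → ℝ) i, (L *ᵥ y) i = (Λ i / m i) * (F *ᵥ y) i := by
    intro y i
    rw [hLdef, ← Matrix.mulVec_mulVec, Matrix.mulVec_diagonal]
  have hAmulVec : ∀ i, (A *ᵥ z) i = Sstar i * (F *ᵥ x₀) i := by
    intro i
    rw [mulVec_apply', mulVec_apply', Finset.mul_sum]
    refine Finset.sum_congr rfl fun j _ => ?_
    rw [hAentry, hx₀def]
    ring
  have hsubL : ∀ i, s * x₀ i ≤ (L *ᵥ x₀) i := by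
    intro i
    rw [hLmulVec]
    have h1 := hsubA i
    rw [hAmulVec i, hzx₀ i] at h1
    -- h1 : s * (c i * x₀ i) ≤ Sstar i * (F *ᵥ x₀) i
    rw [hSstar i] at h1
    rw [div_mul_eq_mul_div, le_div_iff₀ (hmpos i), hmdef]
    dsimp only
    -- goal : s * x₀ i * (μ i * c i) ≤ Λ i * (F *ᵥ x₀) i
    have h3 : μ i * (Λ i / μ i * (F *ᵥ x₀) i) = Λ i * (F *ᵥ x₀) i := by
      field_simp
      rw [mul_assoc]; exact mul_div_cancel_left₀ _ (hμ i).ne'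
    nlinarith [mul_le_mul_of_nonneg_left h1 (hμ i).le, h3]
  -- positivization
  obtain ⟨xp, hxppos, hxpsub⟩ := exists_pos_subinvariant hu0 L hLnn hconnL hs0 hx₀nn hx₀pos hsubL
  have hsubfix : ∀ i, s * (m i * xp i) ≤ Λ i * (F *ᵥ xp) i := by
    intro i
    have h1 := hxpsub i
    rw [hLmulVec] at h1
    have h3 : m i * (Λ i / m i * (F *ᵥ xp) i) = Λ i * (F *ᵥ xp) i := by
      field_simp
      rw [mul_assoc]; exact mul_div_cancel_left₀ _ (hmpos i).ne'
    nlinarith [mul_le_mul_of_nonneg_left h1 (hmpos i).le, h3]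
  -- the unique positive fixed point
  obtain ⟨Istar, ⟨hIpos, hIfix⟩, huniq⟩ :=
    exists_unique_fixed hu0 F hFnn hrowF Λ m d hΛ hmpos hdpos xp hxppos s hs hsubfix
  -- component maps
  set Sof : (Fin u → ℝ) → Fin u → ℝ := fun I i => (Λ i - d i * I i) / μ i with hSofdef
  set Eof : (Fin u → ℝ) → Fin u → ℝ := fun I i => (γ i + μ i + δ i) * I i / ν i with hEofdef
  set Rof : (Fin u → ℝ) → Fin u → ℝ := fun I i => γ i * I i / (η i + μ i) with hRofdef
  have hμSof : ∀ I i, μ i * Sof I i = Λ i - d i * I i := by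
    intro I i
    rw [hSofdef]
    dsimp only
    rw [mul_div_cancel₀ _ (hμ i).ne']
  have hνEof : ∀ I i, ν i * Eof I i = (γ i + μ i + δ i) * I i := by
    intro I i
    rw [hEofdef]
    dsimp only
    rw [mul_div_cancel₀ _ (hν i).ne']
  have hημRof : ∀ I i, (η i + μ i) * Rof I i = γ i * I i := by
    intro I i
    rw [hRofdef]
    dsimp only
    rw [mul_div_cancel₀ _ (hημ i).ne']
  have hcν : ∀ i, c i * ν i = (μ i + ν i) * (μ i + γ i + δ i) := by
    intro i
    rw [hcdef]
    dsimp only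
    rw [div_mul_cancel₀ _ (hν i).ne']
  have hdημ : ∀ i, d i * (η i + μ i) = c i * (η i + μ i) - η i * γ i := by
    intro i
    rw [hddef]
    dsimp only
    rw [sub_mul, div_mul_cancel₀ _ (hημ i).ne']
  -- coefficient matrix pointwise formula
  have hcoef : ∀ (S I : Fin u → ℝ) (i : Fin u),
      ((Matrix.diagonal S * M * Matrix.diagonal B * Pᵀ) *ᵥ I) i = S i * (F *ᵥ I) i := by
    intro S I i
    have h1 : Matrix.diagonal S * M * Matrix.diagonal B * Pᵀ = Matrix.diagonal S * F := by
      rw [hFdef]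
      simp only [Matrix.mul_assoc]
    rw [h1, ← Matrix.mulVec_mulVec, Matrix.mulVec_diagonal]
  -- forward: construct solution from Istar
  have hforward : ∀ I : Fin u → ℝ, (∀ i, 0 < I i) →
      (∀ i, I i * (m i + d i * (F *ᵥ I) i) = Λ i * (F *ᵥ I) i) →
      (0 = Λ - (Matrix.diagonal (Sof I) * M * Matrix.diagonal B * Pᵀ) *ᵥ I -
          Matrix.diagonal μ *ᵥ (Sof I) + Matrix.diagonal η *ᵥ (Rof I)) ∧
      (0 = (Matrix.diagonal (Sof I) * M * Matrix.diagonal B * Pᵀ) *ᵥ I -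
          Matrix.diagonal (fun i => ν i + μ i) *ᵥ (Eof I)) ∧
      (0 = Matrix.diagonal ν *ᵥ (Eof I) -
          Matrix.diagonal (fun i => γ i + μ i + δ i) *ᵥ I) ∧
      (0 = Matrix.diagonal γ *ᵥ I -
          Matrix.diagonal (fun i => η i + μ i) *ᵥ (Rof I)) := by
    intro I hI hfix
    have hSwI : ∀ i, Sof I i * (F *ᵥ I) i = c i * I i := by
      intro i
      have h1 := hfix i
      have h2 : (μ i * Sof I i) * (F *ᵥ I) i = (Λ i - d i * I i) * (F *ᵥ I) i := by
        rw [hμSof]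
      have h3 : μ i * (c i * I i) = μ i * (c i * I i) := rfl
      -- from h1 : I (m + d w) = Λ w  with m = μ c
      rw [hmdef] at h1
      dsimp only at h1
      -- h1 : I i * (μ i * c i + d i * w) = Λ i * w
      have h4 : μ i * (Sof I i * (F *ᵥ I) i) = μ i * (c i * I i) := by
        linear_combination h2 - h1
      exact mul_left_cancel₀ (hμ i).ne' h4
    refine ⟨?_, ?_, ?_, ?_⟩
    · funext i
      simp only [Pi.add_apply, Pi.sub_apply, Pi.zero_apply, hcoef (Sof I) I i,
        Matrix.mulVec_diagonal]
      have h1 := hSwI i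
      have h2 := hμSof I i
      have h3 := hημRof I i
      have h4 := hdημ i
      have h6 : (η i + μ i) *
          (Λ i - Sof I i * (F *ᵥ I) i - μ i * Sof I i + η i * Rof I i) = 0 := by
        linear_combination (-(η i + μ i)) * h1 - (η i + μ i) * h2 + (η i) * h3 + (I i) * h4
      have h7 := (mul_eq_zero.mp h6).resolve_left (hημ i).ne'
      linarith [h7]
    · funext i
      simp only [Pi.sub_apply, Pi.zero_apply, hcoef (Sof I) I i, Matrix.mulVec_diagonal]
      have h1 := hSwI i
      have h2 := hνEof I i
      have h3 := hcν i
      -- 0 = Sw - (ν+μ)E ; νSw = νcI = (μ+ν)(μ+γ+δ)I ; ν(ν+μ)E = (ν+μ)(γ+μ+δ)I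
      have h4 : ν i * (Sof I i * (F *ᵥ I) i) = ν i * ((ν i + μ i) * Eof I i) := by
        linear_combination (ν i) * h1 - (ν i + μ i) * h2 + (I i) * h3
      have h5 := mul_left_cancel₀ (hν i).ne' h4
      linarith [h5]
    · funext i
      simp only [Pi.sub_apply, Pi.zero_apply, Matrix.mulVec_diagonal]
      linarith [hνEof I i]
    · funext i
      simp only [Pi.sub_apply, Pi.zero_apply, Matrix.mulVec_diagonal]
      linarith [hημRof I i]
  -- backward: any solution gives a fixed point with determined S, E, R
  have hbackward : ∀ S E I R : Fin u → ℝ, (∀ i, 0 < I i) →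
      (0 = Λ - (Matrix.diagonal S * M * Matrix.diagonal B * Pᵀ) *ᵥ I -
          Matrix.diagonal μ *ᵥ S + Matrix.diagonal η *ᵥ R) →
      (0 = (Matrix.diagonal S * M * Matrix.diagonal B * Pᵀ) *ᵥ I -
          Matrix.diagonal (fun i => ν i + μ i) *ᵥ E) →
      (0 = Matrix.diagonal ν *ᵥ E - Matrix.diagonal (fun i => γ i + μ i + δ i) *ᵥ I) →
      (0 = Matrix.diagonal γ *ᵥ I - Matrix.diagonal (fun i => η i + μ i) *ᵥ R) →
      ((∀ i, I i * (m i + d i * (F *ᵥ I) i) = Λ i * (F *ᵥ I) i) ∧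
        S = Sof I ∧ E = Eof I ∧ R = Rof I) := by
    intro S E I R hI h1 h2 h3 h4
    have h1i : ∀ i, 0 = Λ i - S i * (F *ᵥ I) i - μ i * S i + η i * R i := by
      intro i
      have := congrFun h1 i
      simpa [hcoef S I i, Matrix.mulVec_diagonal] using this
    have h2i : ∀ i, S i * (F *ᵥ I) i = (ν i + μ i) * E i := by
      intro i
      have := congrFun h2 i
      simp only [Pi.sub_apply, Pi.zero_apply, hcoef S I i, Matrix.mulVec_diagonal] at this
      linarith
    have h3i : ∀ i, ν i * E i = (γ i + μ i + δ i) * I i := by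
      intro i
      have := congrFun h3 i
      simp only [Pi.sub_apply, Pi.zero_apply, Matrix.mulVec_diagonal] at this
      linarith
    have h4i : ∀ i, γ i * I i = (η i + μ i) * R i := by
      intro i
      have := congrFun h4 i
      simp only [Pi.sub_apply, Pi.zero_apply, Matrix.mulVec_diagonal] at this
      linarith
    have hE : E = Eof I := by
      funext i
      have := h3i i
      have h5 := hνEof I i
      have h6 : ν i * E i = ν i * Eof I i := by rw [this, h5]
      exact mul_left_cancel₀ (hν i).ne' h6
    have hR : R = Rof I := by
      funext i
      have := h4i i
      have h5 := hημRof I i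
      have h6 : (η i + μ i) * R i = (η i + μ i) * Rof I i := by rw [← this, h5]
      exact mul_left_cancel₀ (hημ i).ne' h6
    have hSw : ∀ i, S i * (F *ᵥ I) i = c i * I i := by
      intro i
      have ha := h2i i
      have hb := h3i i
      have hcc := hcν i
      -- ν S w = ν (ν+μ) E = (ν+μ)(γ+μ+δ) I = cν I
      have h6 : ν i * (S i * (F *ᵥ I) i) = ν i * (c i * I i) := by
        linear_combination (ν i) * ha + (ν i + μ i) * hb - (I i) * hcc
      exact mul_left_cancel₀ (hν i).ne' h6
    have hS : S = Sof I := by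
      funext i
      have ha := h1i i
      have hb := hSw i
      have hc1 := h4i i
      have hd1 := hdημ i
      -- μS = Λ - cI + ηR ; (η+μ)R = γI ; d(η+μ) = c(η+μ) - ηγ
      have h6 : (η i + μ i) * (μ i * S i) = (η i + μ i) * (Λ i - d i * I i) := by
        linear_combination (η i + μ i) * ha - (η i + μ i) * hb - (η i) * hc1 + (I i) * hd1
      have h7 := mul_left_cancel₀ (hημ i).ne' h6
      have h8 := hμSof I i
      have h9 : μ i * S i = μ i * Sof I i := by rw [h7, ← h8]
      exact mul_left_cancel₀ (hμ i).ne' h9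
    refine ⟨?_, hS, hE, hR⟩
    intro i
    have ha := hSw i
    have hb : μ i * S i = Λ i - d i * I i := by
      rw [hS]
      exact hμSof I i
    rw [hmdef]
    dsimp only
    -- I (μ c + d w) = Λ w : from μ (S w) = μ c I and (μ S) w = (Λ - dI) w
    have h6 : (μ i * S i) * (F *ᵥ I) i = (Λ i - d i * I i) * (F *ᵥ I) i := by rw [hb]
    have h7 : μ i * (S i * (F *ᵥ I) i) = μ i * (c i * I i) := by rw [ha]
    linear_combination h6 - h7
  -- assemble
  refine ⟨(Sof Istar, Eof Istar, Istar, Rof Istar), ?_, ?_⟩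
  · obtain ⟨e1, e2, e3, e4⟩ := hforward Istar hIpos hIfix
    exact ⟨hIpos, e1, e2, e3, e4⟩
  · rintro ⟨yS, yE, yI, yR⟩ ⟨hyI, h1, h2, h3, h4⟩
    obtain ⟨hfixy, hyS, hyE, hyR⟩ := hbackward yS yE yI yR hyI h1 h2 h3 h4
    have hyIeq : yI = Istar := huniq yI ⟨hyI, hfixy⟩
    subst hyIeq
    simp only [Prod.mk.injEq]
    exact ⟨hyS, hyE, trivial, hyR⟩
end
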